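/- arXiv:2205.12116 — 12 statements merged into one kernel-verified Lean document; each statement's English description precedes it below -/
import Mathlib

section
/- Let A ⟶f B ⟶g C ⟶h A⟦1⟧ be a distinguished triangle in C. If f factors through an object of N and C belongs to N, then B belongs to N. -/
open CategoryTheory CategoryTheory.Limits CategoryTheory.Pretriangulated

universe v u v₂ u₂

variable {C : Type u} [Category.{v} C] [Preadditive C] [HasZeroObject C]
  [HasShift C ℤ] [∀ n : ℤ, (shiftFunctor C n).Additive] [Pretriangulated C]

/-- `f : X ⟶ Y` factors through an object of `N`. -/
def FactorsThru (N : Set C) {X Y : C} (f : X ⟶ Y) : Prop :=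
  ∃ (Z : C) (_ : Z ∈ N) (u : X ⟶ Z) (v : Z ⟶ Y), f = u ≫ v

/-- The morphism `X⟦-1⟧ ⟶ A` obtained from `h : X ⟶ A⟦1⟧` by shifting by `-1` and
composing with the canonical isomorphism `A⟦1⟧⟦-1⟧ ≅ A`. -/
noncomputable def descShift {X A : C} (h : X ⟶ A⟦(1:ℤ)⟧) : X⟦(-1:ℤ)⟧ ⟶ A :=
  h⟦(-1:ℤ)⟧' ≫ (shiftEquiv C (1:ℤ)).unitIso.inv.app A

/-- The class `S_N` of morphisms fitting in a distinguished triangle whose two other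
maps factor through `N`. -/
def SN (N : Set C) {B C₀ : C} (g : B ⟶ C₀) : Prop :=
  ∃ (A : C) (f : A ⟶ B) (h : C₀ ⟶ A⟦(1:ℤ)⟧),
    (Triangle.mk f g h ∈ distTriang C) ∧ FactorsThru N f ∧ FactorsThru N h

/-- The class `L`. -/
def ClassL (N : Set C) {A B : C} (f : A ⟶ B) : Prop :=
  ∃ (N₀ : C) (_ : N₀ ∈ N) (g : B ⟶ N₀) (h : N₀ ⟶ A⟦(1:ℤ)⟧),
    (Triangle.mk f g h ∈ distTriang C) ∧ FactorsThru N (descShift h)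

/-- The class `R`. -/
def ClassR (N : Set C) {B C₀ : C} (g : B ⟶ C₀) : Prop :=
  ∃ (N₀ : C) (_ : N₀ ∈ N) (f : N₀ ⟶ B) (h : C₀ ⟶ N₀⟦(1:ℤ)⟧),
    (Triangle.mk f g h ∈ distTriang C) ∧ FactorsThru N h

/-- Condition (Lex) on a morphism `h : C₀ ⟶ A⟦1⟧`. -/
def LexCond (N : Set C) {C₀ A : C} (h : C₀ ⟶ A⟦(1:ℤ)⟧) : Prop :=
  ∀ (N₀ : C), N₀ ∈ N → ∀ (x : N₀ ⟶ C₀), FactorsThru N (descShift (x ≫ h))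

/-- Condition (Rex) on a morphism `h : C₀ ⟶ A⟦1⟧`. -/
def RexCond (N : Set C) {C₀ A : C} (h : C₀ ⟶ A⟦(1:ℤ)⟧) : Prop :=
  ∀ (N₀ : C), N₀ ∈ N → ∀ (y : A ⟶ N₀),
    ∃ (M : C) (_ : M ∈ N) (u : C₀⟦(-1:ℤ)⟧ ⟶ M⟦(-1:ℤ)⟧) (v : M⟦(-1:ℤ)⟧ ⟶ N₀),
      descShift h ≫ y = u ≫ v

/-- `S_N` as a morphism property. -/
def SNProp (N : Set C) : MorphismProperty C := fun _ _ g => SN N g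


theorem stmt0 (N : Set C)
    (hN0 : ∀ X : C, Limits.IsZero X → X ∈ N)
    (hNiso : ∀ ⦃X Y : C⦄, (X ≅ Y) → X ∈ N → Y ∈ N)
    (hNsum : ∀ ⦃X Z : C⦄ (i : X ⟶ Z) (r : Z ⟶ X), i ≫ r = 𝟙 X → Z ∈ N → X ∈ N)
    (hNext : ∀ (T : Triangle C), (T ∈ distTriang C) → T.obj₁ ∈ N → T.obj₃ ∈ N → T.obj₂ ∈ N)
    {A B C₀ : C} (f : A ⟶ B) (g : B ⟶ C₀) (h : C₀ ⟶ A⟦(1:ℤ)⟧)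
    (hT : Triangle.mk f g h ∈ distTriang C)
    (hf : FactorsThru N f) (hC : C₀ ∈ N) :
    B ∈ N := by
  obtain ⟨Z, hZ, u, v, huv⟩ := hf
  -- the inverse rotation `C₀⟦-1⟧ ⟶ A ⟶ B ⟶ C₀⟦-1⟧⟦1⟧`
  have hTinv : (Triangle.mk f g h).invRotate ∈ distTriang C := inv_rot_of_distTriang _ hT
  -- cone of `δ ≫ u` where `δ` is the first map of the inverse rotation
  obtain ⟨M, m, p, hT'⟩ :=
    Pretriangulated.distinguished_cocone_triangle ((Triangle.mk f g h).invRotate.mor₁ ≫ u)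
  -- M ∈ N : it is an extension of `C₀⟦-1⟧⟦1⟧ ≅ C₀` by `Z`
  have hM : M ∈ N := by
    refine hNext (Triangle.mk ((Triangle.mk f g h).invRotate.mor₁ ≫ u) m p).rotate
      (rot_of_distTriang _ hT') hZ ?_
    exact hNiso ((shiftEquiv C (1:ℤ)).counitIso.app C₀).symm hC
  -- φ : B ⟶ M with f ≫ φ = u ≫ m
  obtain ⟨φ₀, hφ₁, -⟩ := Pretriangulated.complete_distinguished_triangle_morphism
    (Triangle.mk f g h).invRotate (Triangle.mk ((Triangle.mk f g h).invRotate.mor₁ ≫ u) m p)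
    hTinv hT' (𝟙 _) u (Category.id_comp _).symm
  let φ : B ⟶ M := φ₀
  have hφ : f ≫ φ = u ≫ m := hφ₁
  -- ψ : M ⟶ B with v = m ≫ ψ
  have hwv : ((Triangle.mk f g h).invRotate.mor₁ ≫ u) ≫ v = 0 := by
    have hz := comp_distTriang_mor_zero₁₂ _ hTinv
    have : (Triangle.mk f g h).invRotate.mor₂ = f := rfl
    refine (Category.assoc _ _ _).trans ?_
    refine (congrArg (fun x => (Triangle.mk f g h).invRotate.mor₁ ≫ x) huv).symm.trans ?_
    exact hz
  obtain ⟨ψ₀, hψ₀⟩ := Pretriangulated.Triangle.yoneda_exact₂ _ hT' v hwv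
  let ψ : M ⟶ B := ψ₀
  have hψ : v = m ≫ ψ := hψ₀
  -- `𝟙 B - φ ≫ ψ` is killed by precomposition with `f`, hence factors through `g`
  have hker : f ≫ (𝟙 B - φ ≫ ψ) = 0 := by
    have hfφψ : f ≫ φ ≫ ψ = f := by
      rw [← Category.assoc, hφ, Category.assoc, ← hψ, huv]
    simp [Preadditive.comp_sub, hfφψ]
  obtain ⟨s, hs⟩ := Pretriangulated.Triangle.yoneda_exact₂ _ hT (𝟙 B - φ ≫ ψ) hker
  -- B is a direct summand of `M ⊞ C₀`
  have hMC : (M ⊞ C₀ : C) ∈ N :=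
    hNext _ (Pretriangulated.binaryBiproductTriangle_distinguished M C₀) hM hC
  refine hNsum (biprod.lift φ g) (biprod.desc ψ s) ?_ hMC
  have hs' : 𝟙 B - φ ≫ ψ = g ≫ s := hs
  have hsum : φ ≫ ψ + g ≫ s = 𝟙 B := by
    rw [← hs']; abel
  exact biprod.lift_desc.trans hsum
end

section
/- Let A ⟶f B ⟶g C ⟶h A⟦1⟧ be a distinguished triangle in C. If h factors through an object of N and B belongs to N, then C belongs to N. -/
open CategoryTheory CategoryTheory.Limits CategoryTheory.Pretriangulated

universe v u v₂ u₂

variable {C : Type u} [Category.{v} C] [Preadditive C] [HasZeroObject C]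
  [HasShift C ℤ] [∀ n : ℤ, (shiftFunctor C n).Additive] [Pretriangulated C]

lemma counitInv_comp_shift_descShift {C : Type u} [Category.{v} C] [Preadditive C]
    [HasZeroObject C] [HasShift C ℤ] [∀ n : ℤ, (shiftFunctor C n).Additive]
    [Pretriangulated C] {Z A : C} (v : Z ⟶ A⟦(1:ℤ)⟧) :
    ((shiftEquiv C (1:ℤ)).counitIso.inv.app Z) ≫ (shiftFunctor C (1:ℤ)).map (descShift v) = v := by
  have e : (shiftEquiv C (1:ℤ)).counitIso.inv.app Z ≫ (shiftFunctor C (1:ℤ)).map (descShift v) =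
      (shiftFunctorCompIsoId C (-1:ℤ) 1 (by norm_num)).inv.app Z ≫ (shiftFunctor C (1:ℤ)).map
        ((shiftFunctor C (-1:ℤ)).map v ≫ (shiftFunctorCompIsoId C (1:ℤ) (-1) (by norm_num)).hom.app A) := rfl
  rw [e, Functor.map_comp, shift_neg_shift' (i := (1:ℤ)),
    shift_shiftFunctorCompIsoId_hom_app]
  simp

theorem stmt1 (N : Set C)
    (hN0 : ∀ X : C, Limits.IsZero X → X ∈ N)
    (hNiso : ∀ ⦃X Y : C⦄, (X ≅ Y) → X ∈ N → Y ∈ N)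
    (hNsum : ∀ ⦃X Z : C⦄ (i : X ⟶ Z) (r : Z ⟶ X), i ≫ r = 𝟙 X → Z ∈ N → X ∈ N)
    (hNext : ∀ (T : Triangle C), (T ∈ distTriang C) → T.obj₁ ∈ N → T.obj₃ ∈ N → T.obj₂ ∈ N)
    {A B C₀ : C} (f : A ⟶ B) (g : B ⟶ C₀) (h : C₀ ⟶ A⟦(1:ℤ)⟧)
    (hT : Triangle.mk f g h ∈ distTriang C)
    (hh : FactorsThru N h) (hB : B ∈ N) :
    C₀ ∈ N := by
  obtain ⟨Z, hZ, u, v, huv⟩ := hh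
  set w : Z⟦(-1:ℤ)⟧ ⟶ A := descShift v with hwdef
  obtain ⟨Q, p, q, hT1⟩ := distinguished_cocone_triangle (w ≫ f)
  have hZ' : ((Z⟦(-1:ℤ)⟧)⟦(1:ℤ)⟧ : C) ∈ N :=
    hNiso ((shiftEquiv C (1:ℤ)).counitIso.app Z).symm hZ
  have hQ : Q ∈ N := hNext _ (rot_of_distTriang _ hT1) hB hZ'
  obtain ⟨r, hr1, hr2⟩ :=
    complete_distinguished_triangle_morphism _ _ hT1 hT w (𝟙 B) (Category.comp_id _)
  set u' : C₀ ⟶ (Z⟦(-1:ℤ)⟧)⟦(1:ℤ)⟧ := u ≫ (shiftEquiv C (1:ℤ)).counitIso.inv.app Z with hu'def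
  have key : u' ≫ (shiftFunctor C (1:ℤ)).map w = h := by
    erw [huv, hu'def, Category.assoc, hwdef, counitInv_comp_shift_descShift]
  have hzero : u' ≫ (shiftFunctor C (1:ℤ)).map (w ≫ f) = 0 := by
    rw [Functor.map_comp, ← Category.assoc, key]
    exact comp_distTriang_mor_zero₃₁ _ hT
  obtain ⟨i, hi⟩ := Triangle.coyoneda_exact₁ _ hT1 u' hzero
  change Q ⟶ C₀ at r
  change C₀ ⟶ Q at i
  replace hr2 : q ≫ (shiftFunctor C (1:ℤ)).map w = r ≫ h := hr2
  replace hi : u' = i ≫ q := hi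
  have hc : (𝟙 C₀ - i ≫ r) ≫ h = 0 := by
    rw [Preadditive.sub_comp, Category.id_comp, Category.assoc, ← hr2, ← Category.assoc, ← hi, key,
      sub_self]
  obtain ⟨d, hd⟩ := Triangle.coyoneda_exact₃ _ hT _ hc
  change C₀ ⟶ B at d
  replace hd : 𝟙 C₀ - i ≫ r = d ≫ g := hd
  have hQB : (Q ⊞ B : C) ∈ N := hNext _ (binaryBiproductTriangle_distinguished Q B) hQ hB
  refine hNsum (biprod.lift i d) (biprod.desc r g) ?_ hQB
  rw [biprod.lift_desc, ← hd]
  abel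
end

section
/- Let A ⟶f B ⟶g C ⟶h A⟦1⟧ be a distinguished triangle in C. Then h factors through an object of N if and only if g admits a factorization g = g₂ ∘ g₁ where g₁: B ⟶ C' fits into a distinguished triangle B ⟶g₁ C' ⟶ N₀ ⟶ B⟦1⟧ with N₀ ∈ N, and g₂: C' ⟶ C is a split epimorphism (a retraction). -/
open CategoryTheory CategoryTheory.Limits CategoryTheory.Pretriangulated

universe v u v₂ u₂

variable {C : Type u} [Category.{v} C] [Preadditive C] [HasZeroObject C]
  [HasShift C ℤ] [∀ n : ℤ, (shiftFunctor C n).Additive] [Pretriangulated C]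

private lemma counit_descShift {Z A' : C} (v : Z ⟶ A'⟦(1:ℤ)⟧) :
    (shiftEquiv C (1:ℤ)).counitIso.inv.app Z ≫ (descShift v)⟦(1:ℤ)⟧' = v := by
  change (shiftFunctorCompIsoId C (-1:ℤ) 1 (by omega)).inv.app Z ≫
    ((v⟦(-1:ℤ)⟧') ≫ (shiftFunctorCompIsoId C (1:ℤ) (-1) (by omega)).hom.app A')⟦(1:ℤ)⟧' = v
  rw [Functor.map_comp]
  have h1 := (shiftFunctorCompIsoId C (-1:ℤ) (1:ℤ) (by omega)).inv.naturality v
  simp only [Functor.comp_map, Functor.id_map] at h1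
  rw [← Category.assoc, ← h1, Category.assoc,
    shift_shiftFunctorCompIsoId_hom_app, Iso.inv_hom_id_app, Category.comp_id]

theorem stmt2 (N : Set C)
    (hN0 : ∀ X : C, Limits.IsZero X → X ∈ N)
    (hNiso : ∀ ⦃X Y : C⦄, (X ≅ Y) → X ∈ N → Y ∈ N)
    (hNsum : ∀ ⦃X Z : C⦄ (i : X ⟶ Z) (r : Z ⟶ X), i ≫ r = 𝟙 X → Z ∈ N → X ∈ N)
    (hNext : ∀ (T : Triangle C), (T ∈ distTriang C) → T.obj₁ ∈ N → T.obj₃ ∈ N → T.obj₂ ∈ N)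
    {A B C₀ : C} (f : A ⟶ B) (g : B ⟶ C₀) (h : C₀ ⟶ A⟦(1:ℤ)⟧)
    (hT : Triangle.mk f g h ∈ distTriang C) :
    FactorsThru N h ↔
      ∃ (C' : C) (g₁ : B ⟶ C') (g₂ : C' ⟶ C₀),
        g = g₁ ≫ g₂ ∧ IsSplitEpi g₂ ∧
          ∃ (N₀ : C) (_ : N₀ ∈ N) (p : C' ⟶ N₀) (q : N₀ ⟶ B⟦(1:ℤ)⟧),
            Triangle.mk g₁ p q ∈ distTriang C := by
  constructor
  · rintro ⟨Z, hZ, u, v, huv⟩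
    obtain ⟨C', g₁, e, hT₂⟩ := distinguished_cocone_triangle (descShift v ≫ f)
    obtain ⟨g₂, hg₂₁, hg₂₂⟩ : ∃ g₂ : C' ⟶ C₀,
        g₁ ≫ g₂ = 𝟙 B ≫ g ∧ e ≫ (descShift v)⟦(1:ℤ)⟧' = g₂ ≫ h :=
      complete_distinguished_triangle_morphism _ _ hT₂ hT (descShift v) (𝟙 B) (Category.comp_id _)
    rw [Category.id_comp] at hg₂₁
    set u' : C₀ ⟶ (Z⟦(-1:ℤ)⟧)⟦(1:ℤ)⟧ :=
      u ≫ (shiftEquiv C (1:ℤ)).counitIso.inv.app Z with hu'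
    have hu'e : u' ≫ ((descShift v ≫ f)⟦(1:ℤ)⟧') = 0 := by
      erw [Functor.map_comp, hu', Category.assoc, ← Category.assoc _ _ (f⟦(1:ℤ)⟧'),
        counit_descShift, ← Category.assoc, ← huv]
      exact comp_distTriang_mor_zero₃₁ _ hT
    obtain ⟨t, ht⟩ : ∃ t : C₀ ⟶ C', u' = t ≫ e :=
      Triangle.coyoneda_exact₁ _ hT₂ u' hu'e
    have hdh : (𝟙 C₀ - t ≫ g₂) ≫ h = 0 := by
      rw [Preadditive.sub_comp, Category.id_comp, Category.assoc, ← hg₂₂, ← Category.assoc,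
        ← ht, hu']
      erw [Category.assoc, counit_descShift, ← huv, sub_self]
    obtain ⟨w, hw⟩ : ∃ w : C₀ ⟶ B, 𝟙 C₀ - t ≫ g₂ = w ≫ g :=
      Triangle.coyoneda_exact₃ _ hT (𝟙 C₀ - t ≫ g₂) hdh
    refine ⟨C', g₁, g₂, hg₂₁.symm, ⟨⟨t + w ≫ g₁, ?_⟩⟩,
      (Z⟦(-1:ℤ)⟧)⟦(1:ℤ)⟧, hNiso ((shiftEquiv C (1:ℤ)).counitIso.symm.app Z) hZ,
      e, -(descShift v ≫ f)⟦(1:ℤ)⟧', rot_of_distTriang _ hT₂⟩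
    rw [Preadditive.add_comp, Category.assoc, hg₂₁, ← hw]
    abel
  · rintro ⟨C', g₁, g₂, hgfac, hsplit, N₀, hN₀, p, q, hT'⟩
    have h0 : g₁ ≫ (g₂ ≫ h) = 0 := by
      rw [← Category.assoc, ← hgfac]
      exact comp_distTriang_mor_zero₂₃ _ hT
    obtain ⟨r, hr⟩ : ∃ r : N₀ ⟶ A⟦(1:ℤ)⟧, g₂ ≫ h = p ≫ r :=
      Triangle.yoneda_exact₂ _ hT' (g₂ ≫ h) h0
    refine ⟨N₀, hN₀, section_ g₂ ≫ p, r, ?_⟩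
    rw [Category.assoc, ← hr, ← Category.assoc, IsSplitEpi.id, Category.id_comp]
end

section
/- Let A ⟶f B ⟶g C ⟶h A⟦1⟧ be a distinguished triangle in C. Then h factors through an object of N if and only if g is an epimorphism modulo N, i.e., for every morphism x: C ⟶ X, if x ∘ g factors through an object of N then x factors through an object of N. -/
open CategoryTheory CategoryTheory.Limits CategoryTheory.Pretriangulated

universe v u v₂ u₂

variable {C : Type u} [Category.{v} C] [Preadditive C] [HasZeroObject C]
  [HasShift C ℤ] [∀ n : ℤ, (shiftFunctor C n).Additive] [Pretriangulated C]

theorem stmt3 (N : Set C)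
    (hN0 : ∀ X : C, Limits.IsZero X → X ∈ N)
    (hNiso : ∀ ⦃X Y : C⦄, (X ≅ Y) → X ∈ N → Y ∈ N)
    (hNsum : ∀ ⦃X Z : C⦄ (i : X ⟶ Z) (r : Z ⟶ X), i ≫ r = 𝟙 X → Z ∈ N → X ∈ N)
    (hNext : ∀ (T : Triangle C), (T ∈ distTriang C) → T.obj₁ ∈ N → T.obj₃ ∈ N → T.obj₂ ∈ N)
    {A B C₀ : C} (f : A ⟶ B) (g : B ⟶ C₀) (h : C₀ ⟶ A⟦(1:ℤ)⟧)
    (hT : Triangle.mk f g h ∈ distTriang C) :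
    FactorsThru N h ↔
      ∀ ⦃X : C⦄ (x : C₀ ⟶ X), FactorsThru N (g ≫ x) → FactorsThru N x := by
  constructor
  · rintro ⟨Z, hZ, u, v, huv⟩ X x ⟨M, hM, a, b, hab⟩
    -- complete `b : M ⟶ X` to a distinguished triangle
    obtain ⟨X', c, δ, hbc⟩ := distinguished_cocone_triangle b
    -- TR3: extend the square `g ≫ x = a ≫ b` to a morphism of triangles
    obtain ⟨φ, hφ₁, hφ₂⟩ := complete_distinguished_triangle_morphism
      ((Triangle.mk f g h).rotate) (Triangle.mk b c δ)
      (rot_of_distTriang _ hT) hbc a x (by exact hab)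
    revert φ
    change ∀ (φ : A⟦(1:ℤ)⟧ ⟶ X'), h ≫ φ = x ≫ c → _ → _
    intro φ hφ₁ hφ₂
    -- so `x ≫ c = h ≫ φ` factors through `Z`
    set w : Z ⟶ X' := v ≫ φ with hw
    have hxc : x ≫ c = u ≫ w := by
      rw [hw, ← Category.assoc, ← huv, ← hφ₁]
    set θ : Z ⟶ M⟦(1:ℤ)⟧ := w ≫ δ with hθ
    -- the extension `E` of `Z` by `M`
    obtain ⟨E, e, q, hE⟩ := distinguished_cocone_triangle₂ θ
    have hEN : E ∈ N := hNext _ hE hM hZ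
    -- the map `π : E ⟶ X`
    obtain ⟨π, hπ₁, hπ₂⟩ := complete_distinguished_triangle_morphism₂
      (Triangle.mk e q θ) (Triangle.mk b c δ) hE hbc (𝟙 M) w
      (by show θ ≫ (𝟙 M)⟦(1:ℤ)⟧' = w ≫ δ; simp [hθ])
    revert π
    change ∀ (π : E ⟶ X), _ → q ≫ w = π ≫ c → _
    intro π hπ₁ hπ₂
    -- lift `u` along `q`
    have huθ : u ≫ θ = 0 := by
      have hcδ : c ≫ δ = 0 := comp_distTriang_mor_zero₂₃ _ hbc
      rw [hθ, ← Category.assoc, ← hxc, Category.assoc, hcδ, comp_zero]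
    obtain ⟨ρ, hρ⟩ := Triangle.coyoneda_exact₃ _ hE u huθ
    revert ρ
    change ∀ (ρ : C₀ ⟶ E), u = ρ ≫ q → _
    intro ρ hρ
    -- the difference `x - ρ ≫ π` factors through `M`
    have hd : (x - ρ ≫ π) ≫ c = 0 := by
      rw [Preadditive.sub_comp, Category.assoc, ← hπ₂, ← Category.assoc, ← hρ,
        hxc, sub_self]
    obtain ⟨m, hm⟩ := Triangle.coyoneda_exact₂ _ hbc _ hd
    revert m
    change ∀ (m : C₀ ⟶ M), x - ρ ≫ π = m ≫ b → _
    intro m hm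
    -- conclude: `x` factors through `E ⊞ M ∈ N`
    refine ⟨E ⊞ M,
      hNext _ (binaryBiproductTriangle_distinguished E M) hEN hM,
      biprod.lift ρ m, biprod.desc π b, ?_⟩
    rw [biprod.lift_desc, ← hm]
    abel
  · intro H
    have h0 : g ≫ h = 0 := comp_distTriang_mor_zero₂₃ _ hT
    refine H h ?_
    rw [h0]
    open ZeroObject in
    exact ⟨0, hN0 0 (Limits.isZero_zero C), 0, 0, by simp⟩
end

section
/- Let A ⟶f B ⟶g C ⟶h A⟦1⟧ be a distinguished triangle in C. Then f factors through an object of N if and only if g is a monomorphism modulo N, i.e., for every morphism x: X ⟶ B, if g ∘ x factors through an object of N then x factors through an object of N. -/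
open CategoryTheory CategoryTheory.Limits CategoryTheory.Pretriangulated

universe v u v₂ u₂

variable {C : Type u} [Category.{v} C] [Preadditive C] [HasZeroObject C]
  [HasShift C ℤ] [∀ n : ℤ, (shiftFunctor C n).Additive] [Pretriangulated C]

theorem stmt4 (N : Set C)
    (hN0 : ∀ X : C, Limits.IsZero X → X ∈ N)
    (hNiso : ∀ ⦃X Y : C⦄, (X ≅ Y) → X ∈ N → Y ∈ N)
    (hNsum : ∀ ⦃X Z : C⦄ (i : X ⟶ Z) (r : Z ⟶ X), i ≫ r = 𝟙 X → Z ∈ N → X ∈ N)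
    (hNext : ∀ (T : Triangle C), (T ∈ distTriang C) → T.obj₁ ∈ N → T.obj₃ ∈ N → T.obj₂ ∈ N)
    {A B C₀ : C} (f : A ⟶ B) (g : B ⟶ C₀) (h : C₀ ⟶ A⟦(1:ℤ)⟧)
    (hT : Triangle.mk f g h ∈ distTriang C) :
    FactorsThru N f ↔
      ∀ ⦃X : C⦄ (x : X ⟶ B), FactorsThru N (x ≫ g) → FactorsThru N x := by
  constructor
  · rintro ⟨Z, hZ, u, v, hf⟩ X x ⟨M, hM, a, b, hab⟩
    -- complete v : Z ⟶ B to a distinguished triangle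
    obtain ⟨C', g'', h'', hT₂⟩ := Pretriangulated.distinguished_cocone_triangle v
    -- f ≫ g'' = 0, so g'' factors through g
    have hfg'' : f ≫ g'' = 0 := by
      rw [hf, Category.assoc]
      have := comp_distTriang_mor_zero₁₂ _ hT₂
      change v ≫ g'' = 0 at this
      rw [this, comp_zero]
    obtain ⟨c, hc⟩ : ∃ c : C₀ ⟶ C', g'' = g ≫ c := Triangle.yoneda_exact₂ _ hT g'' hfg''
    -- homotopy pullback of b ≫ c along g''
    obtain ⟨E, f₂, g₂, hT₃⟩ :=
      Pretriangulated.distinguished_cocone_triangle₂ (b ≫ c ≫ h'')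
    obtain ⟨φ, hφ₁, hφ₂⟩ : ∃ φ : E ⟶ B, f₂ ≫ φ = 𝟙 Z ≫ v ∧ g₂ ≫ b ≫ c = φ ≫ g'' :=
      complete_distinguished_triangle_morphism₂ _ _ hT₃ hT₂
      (𝟙 Z) (b ≫ c) (by exact (by simp : (b ≫ c ≫ h'') ≫ (shiftFunctor C 1).map (𝟙 Z) = (b ≫ c) ≫ h''))
    have hE : E ∈ N := hNext _ hT₃ hZ hM
    -- a lifts through g₂
    have hxg'' : x ≫ g'' = a ≫ b ≫ c := by
      rw [hc, reassoc_of% hab]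
    have ha0 : a ≫ (b ≫ c ≫ h'') = 0 := by
      have := comp_distTriang_mor_zero₂₃ _ hT₂
      change g'' ≫ h'' = 0 at this
      rw [show a ≫ b ≫ c ≫ h'' = (a ≫ b ≫ c) ≫ h'' by simp, ← hxg'',
        Category.assoc, this, comp_zero]
    obtain ⟨e, he⟩ : ∃ e : X ⟶ E, a = e ≫ g₂ := Triangle.coyoneda_exact₃ _ hT₃ a ha0
    -- x - e ≫ φ kills g'', hence factors through v
    have hdiff : (x - e ≫ φ) ≫ g'' = 0 := by
      rw [Preadditive.sub_comp, hxg'', Category.assoc, ← hφ₂, he]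
      simp
    obtain ⟨t, ht⟩ : ∃ t : X ⟶ Z, x - e ≫ φ = t ≫ v :=
      Triangle.coyoneda_exact₂ _ hT₂ (x - e ≫ φ) hdiff
    refine ⟨E ⊞ Z, hNext _ (binaryBiproductTriangle_distinguished E Z) hE hZ,
      biprod.lift e t, biprod.desc φ v, ?_⟩
    rw [biprod.lift_desc, ← ht]
    abel
  · intro H
    have h0 : f ≫ g = 0 := comp_distTriang_mor_zero₁₂ _ hT
    obtain ⟨O, hO⟩ := Limits.HasZeroObject.zero (C := C)
    exact H f ⟨O, hN0 _ hO, 0, 0, by rw [h0, zero_comp]⟩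
end

section
/- (Ore condition for S_N modulo N.) Given morphisms x: A ⟶ X and s: A ⟶ B in C with s ∈ S_N, there exist an object X', a morphism t: X ⟶ X' belonging to S_N, and a morphism x': B ⟶ X' such that the difference t ∘ x − x' ∘ s factors through an object of N. -/
open CategoryTheory CategoryTheory.Limits CategoryTheory.Pretriangulated

universe v u v₂ u₂

variable {C : Type u} [Category.{v} C] [Preadditive C] [HasZeroObject C]
  [HasShift C ℤ] [∀ n : ℤ, (shiftFunctor C n).Additive] [Pretriangulated C]

set_option linter.unusedSectionVars false in
private lemma descShift_natural {X A A' : C} (h : X ⟶ A⟦(1:ℤ)⟧) (f : A ⟶ A') :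
    descShift h ≫ f = descShift (h ≫ f⟦(1:ℤ)⟧') := by
  dsimp [descShift]
  have := (shiftEquiv C (1:ℤ)).unitIso.inv.naturality f
  dsimp at this
  exact (Category.assoc _ _ _).trans ((congrArg (fun k => (shiftFunctor C (-1:ℤ)).map h ≫ k)
    this.symm).trans ((Category.assoc _ _ _).symm.trans
      (congrArg (· ≫ _) (Functor.map_comp _ _ _).symm)))

set_option linter.unusedSectionVars false in
private lemma descShift_precomp {X X' A : C} (a : X ⟶ X') (h : X' ⟶ A⟦(1:ℤ)⟧) :
    descShift (a ≫ h) = a⟦(-1:ℤ)⟧' ≫ descShift h := by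
  dsimp [descShift]
  erw [Functor.map_comp, Category.assoc]

theorem stmt7 (N : Set C)
    (hN0 : ∀ X : C, Limits.IsZero X → X ∈ N)
    (hNiso : ∀ ⦃X Y : C⦄, (X ≅ Y) → X ∈ N → Y ∈ N)
    (hNsum : ∀ ⦃X Z : C⦄ (i : X ⟶ Z) (r : Z ⟶ X), i ≫ r = 𝟙 X → Z ∈ N → X ∈ N)
    (hNext : ∀ (T : Triangle C), (T ∈ distTriang C) → T.obj₁ ∈ N → T.obj₃ ∈ N → T.obj₂ ∈ N)
    {A B X : C} (x : A ⟶ X) (s : A ⟶ B) (hs : SN N s) :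
    ∃ (X' : C) (t : X ⟶ X') (x' : B ⟶ X'),
      SN N t ∧ FactorsThru N (x ≫ t - s ≫ x') := by
  obtain ⟨A₀, f, h, hT, hf, hh⟩ := hs
  obtain ⟨N₁, hN₁, f₁, f₂, hfeq⟩ := hf
  obtain ⟨N₂, hN₂, h₁, h₂, hheq⟩ := hh
  -- the map `g`
  set g : N₁ ⟶ X := f₂ ≫ x with hg
  -- the map `ψ : N₂⟦-1⟧ ⟶ N₁`
  set ψ : (N₂⟦(-1:ℤ)⟧ : C) ⟶ N₁ := descShift (h₂ ≫ f₁⟦(1:ℤ)⟧') with hψ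
  -- the triangle `U`
  obtain ⟨W, i, π, hU⟩ := distinguished_cocone_triangle ψ
  have hψi : ψ ≫ i = 0 := comp_distTriang_mor_zero₁₂ _ hU
  -- `N₂⟦-1⟧⟦1⟧ ∈ N`
  have hN₂' : ((N₂⟦(-1:ℤ)⟧ : C)⟦(1:ℤ)⟧ : C) ∈ N := by
    refine hNiso ?_ hN₂
    exact ((shiftFunctorCompIsoId C (-1:ℤ) (1:ℤ) (by omega)).app N₂).symm
  -- `W ∈ N`
  have hW : W ∈ N := hNext _ (rot_of_distTriang _ hU) hN₁ hN₂'
  -- the triangle defining `t`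
  obtain ⟨X', t, c, hTt⟩ := distinguished_cocone_triangle (ψ ≫ g)
  -- the map `eW : W ⟶ X'`
  obtain ⟨eW₀, heW₀, -⟩ := complete_distinguished_triangle_morphism
    (Triangle.mk ψ i π) (Triangle.mk (ψ ≫ g) t c) hU hTt (𝟙 _) g (by exact (Category.id_comp _).symm)
  obtain ⟨eW, heW⟩ : ∃ e : W ⟶ X', i ≫ e = g ≫ t := ⟨eW₀, heW₀⟩
  -- the key vanishing
  have hdesc : descShift h ≫ f₁ ≫ i = 0 := by
    rw [← Category.assoc, descShift_natural, hheq, Category.assoc, descShift_precomp, hψ.symm,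
      Category.assoc, hψi, comp_zero]
  have hmor : (Triangle.mk f s h).invRotate.mor₁ = -descShift h := by
    dsimp [Triangle.invRotate, descShift]
    rfl
  have hkey : (Triangle.mk f s h).invRotate.mor₁ ≫ (f₁ ≫ i) = 0 := by
    erw [hmor, Preadditive.neg_comp, hdesc, neg_zero]
  obtain ⟨γ₀, hγ₀⟩ := Triangle.yoneda_exact₂ _ (inv_rot_of_distTriang _ hT) (f₁ ≫ i) hkey
  obtain ⟨γ, hγ⟩ : ∃ γ : A ⟶ W, f₁ ≫ i = f ≫ γ := ⟨γ₀, hγ₀⟩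
  -- the map `x'`
  have hfu : f ≫ (x ≫ t - γ ≫ eW) = 0 := by
    rw [Preadditive.comp_sub, ← Category.assoc, ← Category.assoc, ← hγ, hfeq]
    simp only [Category.assoc, heW, hg]
    rw [sub_self]
  obtain ⟨x'₀, hx'₀⟩ := Triangle.yoneda_exact₂ _ hT (x ≫ t - γ ≫ eW) hfu
  obtain ⟨x', hx''⟩ : ∃ x' : B ⟶ X', x ≫ t - γ ≫ eW = s ≫ x' := ⟨x'₀, hx'₀⟩
  refine ⟨X', t, x', ⟨N₂⟦(-1:ℤ)⟧, ψ ≫ g, c, hTt, ⟨N₁, hN₁, ψ, g, rfl⟩,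
    ⟨(N₂⟦(-1:ℤ)⟧ : C)⟦(1:ℤ)⟧, hN₂', c, 𝟙 _, (Category.comp_id c).symm⟩⟩, ?_⟩
  have hdiff : x ≫ t - s ≫ x' = γ ≫ eW := by
    rw [← hx'']; abel
  rw [hdiff]
  exact ⟨W, hW, γ, eW, rfl⟩
end

section
/- Let A ⟶f B ⟶g C ⟶h A⟦1⟧ be a distinguished triangle in C. Then Q(g) is an epimorphism in D if and only if h factors through an object of N. -/
open CategoryTheory CategoryTheory.Limits CategoryTheory.Pretriangulated

universe v u v₂ u₂

variable {C : Type u} [Category.{v} C] [Preadditive C] [HasZeroObject C]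
  [HasShift C ℤ] [∀ n : ℤ, (shiftFunctor C n).Additive] [Pretriangulated C]

set_option linter.unusedSectionVars false
set_option linter.unusedVariables false

open ZeroObject

namespace StmtAux

variable {N : Set C}

lemma ft_src {X Y : C} (hX : X ∈ N) (f : X ⟶ Y) : FactorsThru N f :=
  ⟨X, hX, 𝟙 X, f, by simp⟩

lemma ft_tgt {X Y : C} (hY : Y ∈ N) (f : X ⟶ Y) : FactorsThru N f :=
  ⟨Y, hY, f, 𝟙 Y, by simp⟩

lemma ft_precomp {W X Y : C} (g : W ⟶ X) {f : X ⟶ Y} (hf : FactorsThru N f) :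
    FactorsThru N (g ≫ f) := by
  obtain ⟨Z, hZ, u, v, rfl⟩ := hf
  exact ⟨Z, hZ, g ≫ u, v, by simp⟩

lemma ft_postcomp {X Y W : C} (g : Y ⟶ W) {f : X ⟶ Y} (hf : FactorsThru N f) :
    FactorsThru N (f ≫ g) := by
  obtain ⟨Z, hZ, u, v, rfl⟩ := hf
  exact ⟨Z, hZ, u, v ≫ g, by simp⟩

lemma ft_zero (hN0 : ∀ X : C, Limits.IsZero X → X ∈ N) (X Y : C) :
    FactorsThru N (0 : X ⟶ Y) :=
  ⟨0, hN0 _ (isZero_zero C), 0, 0, by simp⟩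

lemma ft_neg {X Y : C} {f : X ⟶ Y} (hf : FactorsThru N f) : FactorsThru N (-f) := by
  obtain ⟨Z, hZ, u, v, rfl⟩ := hf
  exact ⟨Z, hZ, u, -v, by simp⟩

lemma ft_of_eq {X Y : C} {f g : X ⟶ Y} (h : f = g) (hf : FactorsThru N f) :
    FactorsThru N g := h ▸ hf

lemma ft_add
    (hNiso : ∀ ⦃X Y : C⦄, (X ≅ Y) → X ∈ N → Y ∈ N)
    (hNext : ∀ (T : Triangle C), (T ∈ distTriang C) → T.obj₁ ∈ N → T.obj₃ ∈ N → T.obj₂ ∈ N)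
    {X Y : C} {f g : X ⟶ Y} (hf : FactorsThru N f) (hg : FactorsThru N g) :
    FactorsThru N (f + g) := by
  obtain ⟨M₁, hM₁, a₁, b₁, rfl⟩ := hf
  obtain ⟨M₂, hM₂, a₂, b₂, rfl⟩ := hg
  obtain ⟨W0, i, p, hW⟩ := Pretriangulated.distinguished_cocone_triangle (0 : M₂⟦(-1:ℤ)⟧ ⟶ M₁)
  have hM₂' : (M₂⟦(-1:ℤ)⟧⟦(1:ℤ)⟧) ∈ N :=
    hNiso ((shiftEquiv C (1:ℤ)).counitIso.app M₂).symm hM₂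
  have hW0 : W0 ∈ N := by
    have := hNext _ (rot_of_distTriang _ hW) hM₁ hM₂'
    simpa using this
  obtain ⟨r, hr⟩ : ∃ r : W0 ⟶ M₁, 𝟙 M₁ = i ≫ r :=
    Triangle.yoneda_exact₂ _ hW (𝟙 M₁) (by exact Category.comp_id _)
  obtain ⟨sσ, hσ⟩ : ∃ s : (M₂⟦(-1:ℤ)⟧⟦(1:ℤ)⟧) ⟶ W0, 𝟙 (M₂⟦(-1:ℤ)⟧⟦(1:ℤ)⟧) = s ≫ p :=
    Triangle.coyoneda_exact₁ _ hW (𝟙 (M₂⟦(-1:ℤ)⟧⟦(1:ℤ)⟧)) (by exact (Category.id_comp _).trans (Functor.map_zero _ _ _))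
  have hip : i ≫ p = 0 := comp_distTriang_mor_zero₂₃ _ hW
  have hir : i ≫ r = 𝟙 M₁ := hr.symm
  have hsp : sσ ≫ p = 𝟙 _ := hσ.symm
  let e : M₂ ≅ M₂⟦(-1:ℤ)⟧⟦(1:ℤ)⟧ := ((shiftEquiv C (1:ℤ)).counitIso.app M₂).symm
  let r' : W0 ⟶ M₁ := r - p ≫ sσ ≫ r
  have hir' : i ≫ r' = 𝟙 M₁ := by
    simp only [r', Preadditive.comp_sub, hir, reassoc_of% hip]
    simp
  have hsr' : sσ ≫ r' = 0 := by
    simp only [r', Preadditive.comp_sub, reassoc_of% hsp]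
    simp
  refine ⟨W0, hW0, a₁ ≫ i + a₂ ≫ e.hom ≫ sσ, r' ≫ b₁ + p ≫ e.inv ≫ b₂, ?_⟩
  simp only [Preadditive.add_comp, Preadditive.comp_add, Category.assoc]
  rw [reassoc_of% hir', reassoc_of% hip, reassoc_of% hsr', reassoc_of% hsp]
  simp

end StmtAux

namespace StmtAux
variable {C : Type u} [Category.{v} C] [Preadditive C] [HasZeroObject C]
  [HasShift C ℤ] [∀ n : ℤ, (shiftFunctor C n).Additive] [Pretriangulated C]
variable {N : Set C}

/-- Cancellation: if the third object of a distinguished triangle lies in `N`,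
then postcomposing with `mor₁` reflects factorization through `N`. -/
lemma lemC
    (hNiso : ∀ ⦃X Y : C⦄, (X ≅ Y) → X ∈ N → Y ∈ N)
    (hNext : ∀ (T : Triangle C), (T ∈ distTriang C) → T.obj₁ ∈ N → T.obj₃ ∈ N → T.obj₂ ∈ N)
    (T : Triangle C) (hT : T ∈ distTriang C) (h3 : T.obj₃ ∈ N)
    {X : C} {x : T.obj₂ ⟶ X} (hx : FactorsThru N (T.mor₁ ≫ x)) :
    FactorsThru N x := by
  obtain ⟨M, hM, a, b, hab⟩ := hx
  -- inverse rotation: z : T.obj₃⟦-1⟧ ⟶ T.obj₁ with z ≫ T.mor₁ = 0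
  have hT₁ : T.invRotate ∈ distTriang C := inv_rot_of_distTriang _ hT
  set z : (T.obj₃)⟦(-1:ℤ)⟧ ⟶ T.obj₁ := T.invRotate.mor₁ with hz
  have hzk : z ≫ T.mor₁ = 0 := comp_distTriang_mor_zero₁₂ _ hT₁
  -- cone on z ≫ a
  obtain ⟨E, i, p, hTE⟩ := Pretriangulated.distinguished_cocone_triangle (z ≫ a)
  have hE : E ∈ N := by
    have h₁ : ((T.obj₃)⟦(-1:ℤ)⟧⟦(1:ℤ)⟧) ∈ N :=
      hNiso ((shiftEquiv C (1:ℤ)).counitIso.app T.obj₃).symm h3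
    have := hNext _ (rot_of_distTriang _ hTE) hM h₁
    simpa using this
  -- extend b along i
  obtain ⟨bh, hbh⟩ : ∃ bh : E ⟶ X, b = i ≫ bh := by
    refine Triangle.yoneda_exact₂ _ hTE b ?_
    show (z ≫ a) ≫ b = 0
    rw [Category.assoc, ← hab, ← Category.assoc, hzk, zero_comp]
  -- extend a ≫ i along T.mor₁
  obtain ⟨q, hq⟩ : ∃ q : T.obj₂ ⟶ E, a ≫ i = T.mor₁ ≫ q := by
    refine Triangle.yoneda_exact₂ _ hT₁ (a ≫ i) ?_
    show z ≫ a ≫ i = 0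
    rw [← Category.assoc]
    exact comp_distTriang_mor_zero₁₂ _ hTE
  -- the difference is killed by T.mor₁
  obtain ⟨d, hd⟩ : ∃ d : T.obj₃ ⟶ X, x - q ≫ bh = T.mor₂ ≫ d := by
    refine Triangle.yoneda_exact₂ _ hT _ ?_
    rw [Preadditive.comp_sub, hab, ← Category.assoc, ← hq, Category.assoc, ← hbh, sub_self]
  have : x = T.mor₂ ≫ d + q ≫ bh := by rw [← hd]; abel
  refine ft_of_eq this.symm (ft_add hNiso hNext ?_ ?_)
  · exact ft_precomp _ (ft_src h3 d)
  · exact ft_postcomp _ (ft_tgt hE q)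

/-- Dual cancellation: if the first object of a distinguished triangle lies in `N`,
then precomposing with `mor₂` reflects factorization through `N`. -/
lemma lemC'
    (hNiso : ∀ ⦃X Y : C⦄, (X ≅ Y) → X ∈ N → Y ∈ N)
    (hNext : ∀ (T : Triangle C), (T ∈ distTriang C) → T.obj₁ ∈ N → T.obj₃ ∈ N → T.obj₂ ∈ N)
    (T : Triangle C) (hT : T ∈ distTriang C) (h1 : T.obj₁ ∈ N)
    {X : C} {x : X ⟶ T.obj₂} (hx : FactorsThru N (x ≫ T.mor₂)) :
    FactorsThru N x := by
  obtain ⟨M, hM, a, b, hab⟩ := hx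
  -- cone on b ≫ T.mor₃ : M ⟶ T.obj₁⟦1⟧
  obtain ⟨G, aG, bG, hTG⟩ := Pretriangulated.distinguished_cocone_triangle (b ≫ T.mor₃)
  have hT₂ : (Triangle.mk (b ≫ T.mor₃) aG bG).invRotate ∈ distTriang C :=
    inv_rot_of_distTriang _ hTG
  set zG : G⟦(-1:ℤ)⟧ ⟶ M := (Triangle.mk (b ≫ T.mor₃) aG bG).invRotate.mor₁ with hzG
  have hE : (G⟦(-1:ℤ)⟧) ∈ N := by
    have hT₃ := inv_rot_of_distTriang _ hT₂
    have h₁ : ((T.obj₁⟦(1:ℤ)⟧)⟦(-1:ℤ)⟧) ∈ N :=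
      hNiso ((shiftEquiv C (1:ℤ)).unitIso.app T.obj₁ ≪≫
        Iso.refl _) h1
    have := hNext _ hT₃ h₁ hM
    simpa using this
  have hzρ : zG ≫ (b ≫ T.mor₃) = 0 := comp_distTriang_mor_zero₁₂ _ hT₂
  -- lift a through zG
  obtain ⟨ah, hah⟩ : ∃ ah : X ⟶ G⟦(-1:ℤ)⟧, a = ah ≫ zG := by
    refine Triangle.coyoneda_exact₂ _ hT₂ a ?_
    show a ≫ b ≫ T.mor₃ = 0
    rw [← Category.assoc, ← hab, Category.assoc, comp_distTriang_mor_zero₂₃ _ hT, comp_zero]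
  -- lift zG ≫ b through T.mor₂
  obtain ⟨q, hq⟩ : ∃ q : G⟦(-1:ℤ)⟧ ⟶ T.obj₂, zG ≫ b = q ≫ T.mor₂ := by
    refine Triangle.coyoneda_exact₃ _ hT (zG ≫ b) ?_
    rw [Category.assoc]; exact hzρ
  obtain ⟨w, hw⟩ : ∃ w : X ⟶ T.obj₁, x - ah ≫ q = w ≫ T.mor₁ := by
    refine Triangle.coyoneda_exact₂ _ hT _ ?_
    rw [Preadditive.sub_comp, hab, Category.assoc, ← hq, ← Category.assoc, ← hah, sub_self]
  have : x = w ≫ T.mor₁ + ah ≫ q := by rw [← hw]; abel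
  refine ft_of_eq this.symm (ft_add hNiso hNext ?_ ?_)
  · exact ft_postcomp _ (ft_tgt h1 w)
  · exact ft_postcomp _ (ft_tgt hE ah)

end StmtAux

namespace StmtAux
variable {C : Type u} [Category.{v} C] [Preadditive C] [HasZeroObject C]
  [HasShift C ℤ] [∀ n : ℤ, (shiftFunctor C n).Additive] [Pretriangulated C]
variable {N : Set C}

/-- If the connecting map `h` of a triangle factors through `N`, then postcomposition
with `g` reflects `N`-factorization. -/
lemma claim1
    (hNiso : ∀ ⦃X Y : C⦄, (X ≅ Y) → X ∈ N → Y ∈ N)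
    (hNext : ∀ (T : Triangle C), (T ∈ distTriang C) → T.obj₁ ∈ N → T.obj₃ ∈ N → T.obj₂ ∈ N)
    {A B C₀ : C} {f : A ⟶ B} {g : B ⟶ C₀} {h : C₀ ⟶ A⟦(1:ℤ)⟧}
    (hT : Triangle.mk f g h ∈ distTriang C) (hh : FactorsThru N h)
    {X : C} {x : C₀ ⟶ X} (hgx : FactorsThru N (g ≫ x)) :
    FactorsThru N x := by
  obtain ⟨Z, hZ, u, v, huv⟩ := hh
  obtain ⟨Ku, aK, bK, hTu⟩ := Pretriangulated.distinguished_cocone_triangle u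
  have hT₃ : (Triangle.mk u aK bK).invRotate ∈ distTriang C := inv_rot_of_distTriang _ hTu
  set k : Ku⟦(-1:ℤ)⟧ ⟶ C₀ := (Triangle.mk u aK bK).invRotate.mor₁ with hk
  have hku : k ≫ u = 0 := comp_distTriang_mor_zero₁₂ _ hT₃
  have hkh : k ≫ h = 0 := by rw [huv, ← Category.assoc, hku, zero_comp]
  obtain ⟨m, hm⟩ : ∃ m : Ku⟦(-1:ℤ)⟧ ⟶ B, k = m ≫ g :=
    Triangle.coyoneda_exact₃ _ hT k hkh
  have hkx : FactorsThru N (k ≫ x) := by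
    rw [hm, Category.assoc]
    exact ft_precomp m hgx
  exact lemC hNiso hNext _ hT₃ hZ hkx

/-- `claim1` for a morphism of `S_N`. -/
lemma claim1SN
    (hNiso : ∀ ⦃X Y : C⦄, (X ≅ Y) → X ∈ N → Y ∈ N)
    (hNext : ∀ (T : Triangle C), (T ∈ distTriang C) → T.obj₁ ∈ N → T.obj₃ ∈ N → T.obj₂ ∈ N)
    {B C₀ : C} {s : B ⟶ C₀} (hs : SN N s)
    {X : C} {x : C₀ ⟶ X} (hsx : FactorsThru N (s ≫ x)) :
    FactorsThru N x := by
  obtain ⟨A, f, h, hT, _, hh⟩ := hs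
  exact claim1 hNiso hNext hT hh hsx

/-- Precomposition with a morphism of `S_N` reflects `N`-factorization. -/
lemma claim1'SN
    (hNiso : ∀ ⦃X Y : C⦄, (X ≅ Y) → X ∈ N → Y ∈ N)
    (hNext : ∀ (T : Triangle C), (T ∈ distTriang C) → T.obj₁ ∈ N → T.obj₃ ∈ N → T.obj₂ ∈ N)
    {B C₀ : C} {s : B ⟶ C₀} (hs : SN N s)
    {X : C} {x : X ⟶ B} (hxs : FactorsThru N (x ≫ s)) :
    FactorsThru N x := by
  obtain ⟨A, fs, h, hT, hf, _⟩ := hs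
  obtain ⟨Z₁, hZ₁, f₁, f₂, hf12⟩ := hf
  obtain ⟨Q₂, c, r₂, hTc⟩ := Pretriangulated.distinguished_cocone_triangle f₂
  have h0 : f₂ ≫ c = 0 := comp_distTriang_mor_zero₁₂ _ hTc
  have hfc : fs ≫ c = 0 := by rw [hf12, Category.assoc, h0, comp_zero]
  obtain ⟨n, hn⟩ : ∃ n : C₀ ⟶ Q₂, c = s ≫ n := Triangle.yoneda_exact₂ _ hT c hfc
  have hxc : FactorsThru N (x ≫ c) := by
    rw [hn, ← Category.assoc]
    exact ft_postcomp n hxs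
  exact lemC' hNiso hNext _ hTc hZ₁ hxc

/-- Finite composites of morphisms of `S_N`. -/
inductive SChain (N : Set C) : ∀ {X Y : C}, (X ⟶ Y) → Prop
  | of {X Y : C} {s : X ⟶ Y} (hs : SN N s) : SChain N s
  | id (X : C) : SChain N (𝟙 X)
  | comp {X Y Z : C} {s : X ⟶ Y} {t : Y ⟶ Z} :
      SChain N s → SChain N t → SChain N (s ≫ t)

lemma chainCancelLeft
    (hNiso : ∀ ⦃X Y : C⦄, (X ≅ Y) → X ∈ N → Y ∈ N)
    (hNext : ∀ (T : Triangle C), (T ∈ distTriang C) → T.obj₁ ∈ N → T.obj₃ ∈ N → T.obj₂ ∈ N)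
    {B C₀ : C} {s : B ⟶ C₀} (hs : SChain N s) :
    ∀ {X : C} {x : C₀ ⟶ X}, FactorsThru N (s ≫ x) → FactorsThru N x := by
  induction hs with
  | of hs => exact fun hx => claim1SN hNiso hNext hs hx
  | id X => exact fun hx => by simpa using hx
  | comp hs ht ihs iht =>
      intro X x hx
      rw [Category.assoc] at hx
      exact iht (ihs hx)

lemma chainCancelRight
    (hNiso : ∀ ⦃X Y : C⦄, (X ≅ Y) → X ∈ N → Y ∈ N)
    (hNext : ∀ (T : Triangle C), (T ∈ distTriang C) → T.obj₁ ∈ N → T.obj₃ ∈ N → T.obj₂ ∈ N)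
    {B C₀ : C} {s : B ⟶ C₀} (hs : SChain N s) :
    ∀ {X : C} {x : X ⟶ B}, FactorsThru N (x ≫ s) → FactorsThru N x := by
  induction hs with
  | of hs => exact fun hx => claim1'SN hNiso hNext hs hx
  | id X => exact fun hx => by simpa using hx
  | comp hs ht ihs iht =>
      intro X x hx
      rw [← Category.assoc] at hx
      exact ihs (iht hx)

end StmtAux

namespace StmtAux
variable {C : Type u} [Category.{v} C] [Preadditive C] [HasZeroObject C]
  [HasShift C ℤ] [∀ n : ℤ, (shiftFunctor C n).Additive] [Pretriangulated C]
variable {N : Set C}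

/-- Left Ore condition modulo `N` for a morphism of `S_N`. -/
lemma leftOreSN
    (hN0 : ∀ X : C, Limits.IsZero X → X ∈ N)
    (hNiso : ∀ ⦃X Y : C⦄, (X ≅ Y) → X ∈ N → Y ∈ N)
    (hNext : ∀ (T : Triangle C), (T ∈ distTriang C) → T.obj₁ ∈ N → T.obj₃ ∈ N → T.obj₂ ∈ N)
    {Bs Cs : C} {s : Bs ⟶ Cs} (hs : SN N s) {Y : C} (f : Bs ⟶ Y) :
    ∃ (Y' : C) (s'' : Y ⟶ Y') (f' : Cs ⟶ Y') (n : Bs ⟶ Y'),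
      SN N s'' ∧ FactorsThru N n ∧ f ≫ s'' = s ≫ f' + n := by
  obtain ⟨As, fs, hm, hT, hf, hh⟩ := hs
  obtain ⟨Z₁, hZ₁, f₁, f₂, hf12⟩ := hf
  obtain ⟨Z, hZ, u, v, huv⟩ := hh
  -- the connecting map between the two mediating objects
  set w : Z⟦(-1:ℤ)⟧ ⟶ Z₁ := descShift v ≫ f₁ with hw
  obtain ⟨E, i, p, hTw⟩ := Pretriangulated.distinguished_cocone_triangle w
  have hE : E ∈ N := by
    have h₁ : ((Z⟦(-1:ℤ)⟧)⟦(1:ℤ)⟧) ∈ N :=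
      hNiso ((shiftEquiv C (1:ℤ)).counitIso.app Z).symm hZ
    have := hNext _ (rot_of_distTriang _ hTw) hZ₁ h₁
    simpa using this
  -- cone on μ := w ≫ f₂ ≫ f
  obtain ⟨Y', s'', ρ, hTμ⟩ := Pretriangulated.distinguished_cocone_triangle (w ≫ f₂ ≫ f)
  have hs'' : SN N s'' := by
    refine ⟨Z⟦(-1:ℤ)⟧, w ≫ f₂ ≫ f, ρ, hTμ, ?_, ?_⟩
    · exact ⟨Z₁, hZ₁, w, f₂ ≫ f, by simp⟩
    · exact ft_tgt (hNiso ((shiftEquiv C (1:ℤ)).counitIso.app Z).symm hZ) ρ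
  -- extend f₂ ≫ f ≫ s'' along i
  obtain ⟨vh, hvh⟩ : ∃ vh : E ⟶ Y', f₂ ≫ f ≫ s'' = i ≫ vh := by
    refine Triangle.yoneda_exact₂ _ hTw (f₂ ≫ f ≫ s'') ?_
    show w ≫ f₂ ≫ f ≫ s'' = 0
    have := comp_distTriang_mor_zero₁₂ _ hTμ
    rw [← Category.assoc f₂ f s'', ← Category.assoc]; exact this
  -- extend f₁ ≫ i along fs, using the inverse rotation of the triangle of s
  have hTinv : (Triangle.mk fs s hm).invRotate ∈ distTriang C := inv_rot_of_distTriang _ hT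
  obtain ⟨th, hth⟩ : ∃ th : Bs ⟶ E, f₁ ≫ i = fs ≫ th := by
    refine Triangle.yoneda_exact₂ _ hTinv (f₁ ≫ i) ?_
    show (Triangle.mk fs s hm).invRotate.mor₁ ≫ f₁ ≫ i = 0
    have hwi : w ≫ i = 0 := comp_distTriang_mor_zero₁₂ _ hTw
    have : descShift hm ≫ f₁ ≫ i = 0 := by
      rw [huv]
      have : descShift (u ≫ v) = u⟦(-1:ℤ)⟧' ≫ descShift v := by
        simp [descShift, Functor.map_comp]
      rw [this, Category.assoc, ← Category.assoc (descShift v) f₁ i, ← hw, hwi, comp_zero]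
    have hmor : (Triangle.mk fs s hm).invRotate.mor₁ =
        -(descShift hm) := by
      simp [Triangle.invRotate, descShift]; rfl
    rw [hmor]
    exact (by simp only [Preadditive.neg_comp, this, neg_zero] : (-(descShift hm)) ≫ f₁ ≫ i = 0)
  have hker : fs ≫ (f ≫ s'' - th ≫ vh) = 0 := by
    rw [Preadditive.comp_sub, ← Category.assoc, ← Category.assoc, ← hth,
      Category.assoc, Category.assoc, ← hvh, hf12, Category.assoc, sub_self]
  obtain ⟨f', hfac⟩ : ∃ f' : Cs ⟶ Y', f ≫ s'' - th ≫ vh = s ≫ f' :=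
    Triangle.yoneda_exact₂ _ hT (f ≫ s'' - th ≫ vh) hker
  refine ⟨Y', s'', f', th ≫ vh, hs'', ft_postcomp _ (ft_tgt hE th), ?_⟩
  rw [← sub_eq_iff_eq_add, hfac]

end StmtAux

namespace StmtAux
variable {C : Type u} [Category.{v} C] [Preadditive C] [HasZeroObject C]
  [HasShift C ℤ] [∀ n : ℤ, (shiftFunctor C n).Additive] [Pretriangulated C]
variable {N : Set C}

lemma leftOreChain
    (hN0 : ∀ X : C, Limits.IsZero X → X ∈ N)
    (hNiso : ∀ ⦃X Y : C⦄, (X ≅ Y) → X ∈ N → Y ∈ N)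
    (hNext : ∀ (T : Triangle C), (T ∈ distTriang C) → T.obj₁ ∈ N → T.obj₃ ∈ N → T.obj₂ ∈ N)
    {Bs Cs : C} {s : Bs ⟶ Cs} (hs : SChain N s) :
    ∀ {Y : C} (f : Bs ⟶ Y),
      ∃ (Y' : C) (s'' : Y ⟶ Y') (f' : Cs ⟶ Y') (n : Bs ⟶ Y'),
        SChain N s'' ∧ FactorsThru N n ∧ f ≫ s'' = s ≫ f' + n := by
  induction hs with
  | of hs =>
      intro Y f
      obtain ⟨Y', s'', f', n, h1, h2, h3⟩ := leftOreSN hN0 hNiso hNext hs f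
      exact ⟨Y', s'', f', n, SChain.of h1, h2, h3⟩
  | id X =>
      intro Y f
      exact ⟨Y, 𝟙 Y, f, 0, SChain.id Y, ft_zero hN0 _ _, by simp⟩
  | @comp X₀ Y₀ Z₀ sa ta hsa hta ihs iht =>
      intro Y f
      obtain ⟨Y₁, t₁, f₁', n₁, hc₁, hn₁, he₁⟩ := ihs f
      obtain ⟨Y₂, t₂, f₂', n₂, hc₂, hn₂, he₂⟩ := iht f₁'
      refine ⟨Y₂, t₁ ≫ t₂, f₂', n₁ ≫ t₂ + sa ≫ n₂, SChain.comp hc₁ hc₂,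
        ft_add hNiso hNext (ft_postcomp t₂ hn₁) (ft_precomp sa hn₂), ?_⟩
      rw [← Category.assoc, he₁, Preadditive.add_comp, Category.assoc, he₂]
      simp only [Preadditive.comp_add, Category.assoc]
      abel

end StmtAux

namespace StmtAux
variable {C : Type u} [Category.{v} C] [Preadditive C] [HasZeroObject C]
  [HasShift C ℤ] [∀ n : ℤ, (shiftFunctor C n).Additive] [Pretriangulated C]
variable {N : Set C}

/-- The relation "difference factors through `N`". -/
def relN (N : Set C) : HomRel C := fun _ _ f g => FactorsThru N (f - g)

abbrev CBar (N : Set C) := CategoryTheory.Quotient (relN N)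

/-- Composites of images of `S_N` in the quotient category. -/
def Wbar (N : Set C) : MorphismProperty (CBar N) := fun X Y fbar =>
  ∃ t : X.as ⟶ Y.as, SChain N t ∧ (Quotient.functor (relN N)).map t = fbar

lemma congruence_relN
    (hN0 : ∀ X : C, Limits.IsZero X → X ∈ N)
    (hNiso : ∀ ⦃X Y : C⦄, (X ≅ Y) → X ∈ N → Y ∈ N)
    (hNext : ∀ (T : Triangle C), (T ∈ distTriang C) → T.obj₁ ∈ N → T.obj₃ ∈ N → T.obj₂ ∈ N) :
    Congruence (relN N) := by
  refine @Congruence.mk _ _ _ ⟨?_⟩ ⟨?_⟩ ?_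
  rotate_right
  · intro X Y
    constructor
    · intro f
      exact ft_of_eq (sub_self f).symm (ft_zero hN0 _ _)
    · intro f g hf
      exact ft_of_eq (neg_sub f g) (ft_neg hf)
    · intro f g h h1 h2
      exact ft_of_eq (by abel) (ft_add hNiso hNext h1 h2)
  · intro X Y Z f g g' hg
    exact ft_of_eq (Preadditive.comp_sub f g g') (ft_precomp f hg)
  · intro X Y Z f f' g hf
    exact ft_of_eq (Preadditive.sub_comp f f' g) (ft_postcomp g hf)

lemma sn_toZero (hN0 : ∀ X : C, Limits.IsZero X → X ∈ N)
    {M : C} (hM : M ∈ N) : SN N (0 : M ⟶ (0 : C)) :=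
  ⟨M, 𝟙 M, 0, Pretriangulated.contractible_distinguished M, ft_src hM _, ft_zero hN0 _ _⟩

section Q
variable {D : Type u₂} [Category.{v₂} D] [Preadditive D]
  (Q : C ⥤ D) [Q.Additive] [Q.IsLocalization (SNProp N)]

lemma qKillsN (hN0 : ∀ X : C, Limits.IsZero X → X ∈ N)
    {X Y : C} {p : X ⟶ Y} (hp : FactorsThru N p) : Q.map p = 0 := by
  obtain ⟨M, hM, a, b, rfl⟩ := hp
  have hSN : SNProp N (0 : M ⟶ (0 : C)) := sn_toZero hN0 hM
  haveI : IsIso (Q.map (0 : M ⟶ (0 : C))) := Localization.inverts Q (SNProp N) _ hSN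
  have h00 : (𝟙 (0 : C)) = (0 : (0:C) ⟶ (0:C)) :=
    (IsZero.iff_id_eq_zero _).mp (isZero_zero C)
  have hz0 : IsZero (Q.obj (0 : C)) := by
    rw [IsZero.iff_id_eq_zero, ← Q.map_id, h00, Q.map_zero]
  have hzM : IsZero (Q.obj M) := hz0.of_iso (asIso (Q.map (0 : M ⟶ (0 : C))))
  rw [Q.map_comp, hzM.eq_of_src (Q.map b) 0, comp_zero]

lemma qInvertsChain {X Y : C} {t : X ⟶ Y} (ht : SChain N t) : IsIso (Q.map t) := by
  induction ht with
  | of hs => exact Localization.inverts Q (SNProp N) _ hs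
  | id X => rw [Q.map_id]; infer_instance
  | comp hs ht ihs iht => rw [Q.map_comp]; exact IsIso.comp_isIso

end Q
end StmtAux


open StmtAux in
theorem stmt11 (N : Set C)
    (hN0 : ∀ X : C, Limits.IsZero X → X ∈ N)
    (hNiso : ∀ ⦃X Y : C⦄, (X ≅ Y) → X ∈ N → Y ∈ N)
    (hNsum : ∀ ⦃X Z : C⦄ (i : X ⟶ Z) (r : Z ⟶ X), i ≫ r = 𝟙 X → Z ∈ N → X ∈ N)
    (hNext : ∀ (T : Triangle C), (T ∈ distTriang C) → T.obj₁ ∈ N → T.obj₃ ∈ N → T.obj₂ ∈ N)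
    {D : Type u₂} [Category.{v₂} D] [Preadditive D] [HasZeroObject D]
    (Q : C ⥤ D) [Q.Additive] [Q.IsLocalization (SNProp N)]
    {A B C₀ : C} (f : A ⟶ B) (g : B ⟶ C₀) (h : C₀ ⟶ A⟦(1:ℤ)⟧)
    (hT : Triangle.mk f g h ∈ distTriang C) :
    Epi (Q.map g) ↔ FactorsThru N h := by
  haveI hCong : Congruence (relN N) := congruence_relN hN0 hNiso hNext
  let π : C ⥤ CBar N := CategoryTheory.Quotient.functor (relN N)
  have hdes : ∀ (x y : C) (f₁ f₂ : x ⟶ y), relN N f₁ f₂ → Q.map f₁ = Q.map f₂ := by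
    intro x y f₁ f₂ hr
    have h0 : Q.map (f₁ - f₂) = 0 := qKillsN Q hN0 hr
    rw [Functor.map_sub] at h0
    exact sub_eq_zero.mp h0
  let Qbar : CBar N ⥤ D := CategoryTheory.Quotient.lift (relN N) Q hdes
  have hQQ : ∀ {x y : C} (p : x ⟶ y), Qbar.map (π.map p) = Q.map p := by
    intro x y p
    exact CategoryTheory.Quotient.lift_map_functor_map (relN N) Q hdes p
  haveI : (Wbar N).ContainsIdentities :=
    ⟨fun X => ⟨𝟙 X.as, SChain.id _, π.map_id _⟩⟩
  haveI : (Wbar N).IsStableUnderComposition := by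
    constructor
    rintro X Y Z fb gb ⟨tf, hcf, hπf⟩ ⟨tg, hcg, hπg⟩
    exact ⟨tf ≫ tg, SChain.comp hcf hcg, by rw [Functor.map_comp, hπf, hπg]⟩
  haveI : (Wbar N).IsMultiplicative := ⟨⟩
  haveI : (Wbar N).HasLeftCalculusOfFractions := by
    constructor
    · rintro X Y φ
      obtain ⟨t, hct, hπt⟩ := φ.hs
      obtain ⟨f₀, hf₀⟩ := π.map_surjective φ.f
      obtain ⟨Y', s'', f', n, hch, hn, heq⟩ := leftOreChain hN0 hNiso hNext hct f₀
      refine ⟨MorphismProperty.LeftFraction.mk (π.map f') (π.map s'') ⟨s'', hch, rfl⟩, ?_⟩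
      show φ.f ≫ π.map s'' = φ.s ≫ π.map f'
      rw [← hf₀, ← hπt, ← Functor.map_comp, ← Functor.map_comp,
        CategoryTheory.Quotient.functor_map_eq_iff]
      show FactorsThru N (f₀ ≫ s'' - t ≫ f')
      refine ft_of_eq ?_ hn
      rw [heq]; abel
    · rintro X' X Y f₁ f₂ sbar ⟨t, hct, hπt⟩ hst
      obtain ⟨g₁, hg₁⟩ := π.map_surjective f₁
      obtain ⟨g₂, hg₂⟩ := π.map_surjective f₂
      refine ⟨Y, 𝟙 Y, (Wbar N).id_mem Y, ?_⟩
      rw [Category.comp_id, Category.comp_id, ← hg₁, ← hg₂,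
        CategoryTheory.Quotient.functor_map_eq_iff]
      have hst' : relN N (t ≫ g₁) (t ≫ g₂) := by
        refine (CategoryTheory.Quotient.functor_map_eq_iff (relN N) _ _).mp ?_
        rw [Functor.map_comp, Functor.map_comp, hπt, hg₁, hg₂]
        exact hst
      have hft : FactorsThru N (t ≫ (g₁ - g₂)) :=
        ft_of_eq (Preadditive.comp_sub t g₁ g₂).symm hst'
      show FactorsThru N (g₁ - g₂)
      exact chainCancelLeft hNiso hNext hct hft
  -- `Qbar` inverts `Wbar`
  have hQbarInv : (Wbar N).IsInvertedBy Qbar := by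
    rintro X Y fb ⟨t, hct, rfl⟩
    rw [hQQ]
    exact qInvertsChain Q hct
  let Φ : (Wbar N).Localization ⥤ D := Localization.Construction.lift Qbar hQbarInv
  have hfacΦ : (Wbar N).Q ⋙ Φ = Qbar := Localization.Construction.fac _ _
  have hπWQInv : (SNProp N).IsInvertedBy (π ⋙ (Wbar N).Q) := by
    intro X Y s hs
    have hw : Wbar N (π.map s) := ⟨s, SChain.of hs, rfl⟩
    have := Localization.inverts (Wbar N).Q (Wbar N) _ hw
    exact this
  let Ψ : D ⥤ (Wbar N).Localization := Localization.lift _ hπWQInv Q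
  have hfacΨ : Q ⋙ Ψ ≅ (π ⋙ (Wbar N).Q) := Localization.fac _ hπWQInv Q
  haveI : Localization.Lifting Q (SNProp N) Q (Ψ ⋙ Φ) := by
    refine ⟨?_⟩
    refine ((Functor.associator Q Ψ Φ).symm ≪≫ Functor.isoWhiskerRight hfacΨ Φ) ≪≫ eqToIso ?_
    rw [Functor.assoc, hfacΦ, CategoryTheory.Quotient.lift_spec]
  let ce : (Ψ ⋙ Φ) ≅ 𝟭 D :=
    Localization.liftNatIso Q (SNProp N) Q Q (Ψ ⋙ Φ) (𝟭 D) (Iso.refl Q)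
  let τ : Qbar ⋙ Ψ ≅ (Wbar N).Q := by
    refine CategoryTheory.Quotient.natIsoLift (relN N) (?_ ≪≫ hfacΨ)
    exact eqToIso (by rw [← Functor.assoc, CategoryTheory.Quotient.lift_spec])
  haveI : Localization.Lifting (Wbar N).Q (Wbar N) ((Wbar N).Q) (Φ ⋙ Ψ) := by
    refine ⟨eqToIso ?_ ≪≫ τ⟩
    rw [← Functor.assoc, hfacΦ]
  let ue : (𝟭 ((Wbar N).Localization)) ≅ (Φ ⋙ Ψ) :=
    (Localization.liftNatIso (Wbar N).Q (Wbar N) ((Wbar N).Q) ((Wbar N).Q)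
      (Φ ⋙ Ψ) (𝟭 _) (Iso.refl _)).symm
  let E : (Wbar N).Localization ≌ D := CategoryTheory.Equivalence.mk Φ Ψ ue ce
  haveI : Qbar.IsLocalization (Wbar N) :=
    Functor.IsLocalization.of_equivalence_target (Wbar N).Q (Wbar N) Qbar E
      (eqToIso (show (Wbar N).Q ⋙ E.functor = Qbar from hfacΦ))
  -- the key vanishing of the connecting morphism composite
  have hgh : g ≫ h = 0 := comp_distTriang_mor_zero₂₃ _ hT
  constructor
  · -- Epi → factorization
    intro hepi
    have h1 : Q.map g ≫ Q.map h = Q.map g ≫ 0 := by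
      rw [← Q.map_comp, hgh, Q.map_zero, comp_zero]
    have h2 : Q.map h = 0 := (cancel_epi (Q.map g)).mp h1
    have h3 : Qbar.map (π.map h) = Qbar.map (π.map (0 : C₀ ⟶ A⟦(1:ℤ)⟧)) := by
      rw [hQQ, hQQ, h2, Q.map_zero]
    obtain ⟨Zb, sbar, hsbar, heq⟩ :=
      (MorphismProperty.map_eq_iff_postcomp Qbar (Wbar N) _ _).mp h3
    obtain ⟨t, hct, hπt⟩ := hsbar
    have h6 : relN N (h ≫ t) ((0 : C₀ ⟶ A⟦(1:ℤ)⟧) ≫ t) := by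
      refine (CategoryTheory.Quotient.functor_map_eq_iff (relN N) _ _).mp ?_
      rw [Functor.map_comp, Functor.map_comp, hπt]
      exact heq
    have h7 : FactorsThru N (h ≫ t) := ft_of_eq (by simp) h6
    exact chainCancelRight hNiso hNext hct h7
  · -- factorization → Epi
    intro hh
    refine Preadditive.epi_of_cancel_zero _ ?_
    intro R ξ hξ
    haveI := Localization.essSurj Qbar (Wbar N)
    let R₀ := Qbar.objPreimage R
    let eR : Qbar.obj R₀ ≅ R := Qbar.objObjPreimageIso R
    have hξ' : Q.map g ≫ (ξ ≫ eR.inv) = 0 := by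
      rw [← Category.assoc, hξ, zero_comp]
    obtain ⟨φ, hφ⟩ := Localization.exists_leftFraction Qbar (Wbar N)
      (X := π.obj C₀) (Y := R₀) (ξ ≫ eR.inv)
    obtain ⟨f₀, hf₀⟩ := π.map_surjective φ.f
    have h4 : Q.map g ≫ Qbar.map φ.f = 0 := by
      have h5 : Q.map g ≫ (ξ ≫ eR.inv) ≫ Qbar.map φ.s = 0 := by
        rw [← Category.assoc, hξ', zero_comp]
      rw [hφ, MorphismProperty.LeftFraction.map_comp_map_s] at h5
      exact h5
    have hgf : Q.map (g ≫ f₀) = 0 := by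
      rw [Q.map_comp, ← hQQ f₀, hf₀]
      exact h4
    have h5 : Qbar.map (π.map (g ≫ f₀)) = Qbar.map (π.map (0 : B ⟶ φ.Y'.as)) := by
      rw [hQQ, hQQ, hgf, Q.map_zero]
    obtain ⟨Zb, sbar, hsbar, heq⟩ :=
      (MorphismProperty.map_eq_iff_postcomp Qbar (Wbar N) _ _).mp h5
    obtain ⟨t, hct, hπt⟩ := hsbar
    have h6 : relN N ((g ≫ f₀) ≫ t) ((0 : B ⟶ φ.Y'.as) ≫ t) := by
      refine (CategoryTheory.Quotient.functor_map_eq_iff (relN N) _ _).mp ?_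
      rw [π.map_comp (g ≫ f₀) t, π.map_comp (0 : B ⟶ φ.Y'.as) t, hπt]
      exact heq
    have h7 : FactorsThru N ((g ≫ f₀) ≫ t) := ft_of_eq (by simp) h6
    have h8 : FactorsThru N (g ≫ f₀) := chainCancelRight hNiso hNext hct h7
    have h9 : FactorsThru N f₀ := claim1 hNiso hNext hT hh h8
    have h10 : Qbar.map φ.f = 0 := by
      rw [← hf₀, hQQ]
      exact qKillsN Q hN0 h9
    have h11 : (ξ ≫ eR.inv) = 0 := by
      have hiso : IsIso (Qbar.map φ.s) := Localization.inverts Qbar (Wbar N) _ φ.hs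
      have h12 : (ξ ≫ eR.inv) ≫ Qbar.map φ.s = 0 ≫ Qbar.map φ.s := by
        rw [hφ, MorphismProperty.LeftFraction.map_comp_map_s, h10, zero_comp]
      exact (cancel_mono (Qbar.map φ.s)).mp h12
    have : ξ = (ξ ≫ eR.inv) ≫ eR.hom := by
      rw [Category.assoc, eR.inv_hom_id, Category.comp_id]
    rw [this, h11, zero_comp]
end

section
/- The class S_N satisfies the 2-out-of-3 property with respect to composition: for composable morphisms s: A ⟶ B and t: B ⟶ C, if any two of s, t, and t ∘ s belong to S_N, then so does the third. -/
set_option linter.unusedSectionVars false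



open CategoryTheory CategoryTheory.Limits CategoryTheory.Pretriangulated

universe v u v₂ u₂

variable {C : Type u} [Category.{v} C] [Preadditive C] [HasZeroObject C]
  [HasShift C ℤ] [∀ n : ℤ, (shiftFunctor C n).Additive] [Pretriangulated C]

/-! ### Auxiliary lemmas -/

lemma factorsThru_comp_right (N : Set C) {X Y Z : C} {f : X ⟶ Y} (hf : FactorsThru N f)
    (g : Y ⟶ Z) : FactorsThru N (f ≫ g) := by
  obtain ⟨P, hP, u, v, rfl⟩ := hf
  exact ⟨P, hP, u, v ≫ g, by simp⟩

lemma factorsThru_comp_left (N : Set C) {X Y Z : C} (g : X ⟶ Y) {f : Y ⟶ Z}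
    (hf : FactorsThru N f) : FactorsThru N (g ≫ f) := by
  obtain ⟨P, hP, u, v, rfl⟩ := hf
  exact ⟨P, hP, g ≫ u, v, by simp⟩

lemma factorsThru_zero (N : Set C)
    (hN0 : ∀ X : C, Limits.IsZero X → X ∈ N) {X Y : C} :
    FactorsThru N (0 : X ⟶ Y) := by
  obtain ⟨Z₀, hZ₀⟩ := HasZeroObject.zero (C := C)
  exact ⟨Z₀, hN0 Z₀ hZ₀, 0, 0, by simp⟩

lemma factorsThru_add (N : Set C)
    (hNext : ∀ (T : Triangle C), (T ∈ distTriang C) → T.obj₁ ∈ N → T.obj₃ ∈ N → T.obj₂ ∈ N)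
    {X Y : C} {f g : X ⟶ Y} (hf : FactorsThru N f) (hg : FactorsThru N g) :
    FactorsThru N (f + g) := by
  obtain ⟨P, hP, u, v, rfl⟩ := hf
  obtain ⟨Q, hQ, u', v', rfl⟩ := hg
  exact ⟨P ⊞ Q, hNext _ (binaryBiproductTriangle_distinguished P Q) hP hQ,
    biprod.lift u u', biprod.desc v v', by simp⟩

/-- Key lemma (A1): in a distinguished triangle `U ⟶ V ⟶ Z ⟶ U⟦1⟧` whose first map
factors through `N`, any map into `V` whose composition with `V ⟶ Z` factors through `N`
itself factors through `N`. -/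
lemma lemA1 (N : Set C)
    (hNext : ∀ (T : Triangle C), (T ∈ distTriang C) → T.obj₁ ∈ N → T.obj₃ ∈ N → T.obj₂ ∈ N)
    {U V Z : C} {a : U ⟶ V} {b : V ⟶ Z} {c : Z ⟶ U⟦(1:ℤ)⟧}
    (hT : Triangle.mk a b c ∈ distTriang C)
    (ha : FactorsThru N a) {X : C} {φ : X ⟶ V}
    (hφ : FactorsThru N (φ ≫ b)) : FactorsThru N φ := by
  obtain ⟨Na, hNa, a₁, a₂, ha2⟩ := ha
  obtain ⟨M, hM, c₁, c₂, hc⟩ := hφ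
  obtain ⟨W₁, w, w', hTa⟩ := distinguished_cocone_triangle a₂
  obtain ⟨ε, hε₁, hε₂⟩ : ∃ ε : Z ⟶ W₁, b ≫ ε = 𝟙 V ≫ w ∧ c ≫ a₁⟦(1:ℤ)⟧' = ε ≫ w' := complete_distinguished_triangle_morphism
    (Triangle.mk a b c) (Triangle.mk a₂ w w') hT hTa a₁ (𝟙 V)
    (by show a ≫ 𝟙 V = a₁ ≫ a₂; rw [Category.comp_id, ha2])
  rw [Category.id_comp] at hε₁
  -- hε₁ : b ≫ ε = w ; hε₂ : c ≫ a₁⟦1⟧' = ε ≫ w'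
  have hbc : b ≫ c = 0 := comp_distTriang_mor_zero₂₃ _ hT
  obtain ⟨E, u, v, hTE⟩ := distinguished_cocone_triangle₂ (c₂ ≫ c ≫ a₁⟦(1:ℤ)⟧')
  have hE : E ∈ N := hNext _ hTE hNa hM
  have hccc : c₁ ≫ c₂ ≫ c = 0 := by
    rw [← Category.assoc, ← hc, Category.assoc, hbc, comp_zero]
  obtain ⟨ψ₀, hψ₀⟩ : ∃ ψ₀ : X ⟶ E, c₁ = ψ₀ ≫ v := Triangle.coyoneda_exact₃ _ hTE c₁ (by
    show c₁ ≫ c₂ ≫ c ≫ a₁⟦(1:ℤ)⟧' = 0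
    rw [show c₁ ≫ c₂ ≫ c ≫ a₁⟦(1:ℤ)⟧' = (c₁ ≫ c₂ ≫ c) ≫ a₁⟦(1:ℤ)⟧' by
      simp only [Category.assoc], hccc, zero_comp])
  -- hψ₀ : c₁ = ψ₀ ≫ v
  have hvμ : v ≫ c₂ ≫ c ≫ a₁⟦(1:ℤ)⟧' = 0 := by
    have := comp_distTriang_mor_zero₂₃ _ hTE
    change v ≫ c₂ ≫ c ≫ a₁⟦(1:ℤ)⟧' = 0 at this
    simpa only [Category.assoc] using this
  obtain ⟨Λ, hΛ⟩ : ∃ Λ : E ⟶ V, v ≫ c₂ ≫ ε = Λ ≫ w := Triangle.coyoneda_exact₃ _ hTa (v ≫ c₂ ≫ ε) (by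
    show (v ≫ c₂ ≫ ε) ≫ w' = 0
    rw [Category.assoc, Category.assoc, ← hε₂]
    simpa only [Category.assoc] using hvμ)
  -- hΛ : v ≫ c₂ ≫ ε = Λ ≫ w
  obtain ⟨τ, hτ⟩ : ∃ τ : X ⟶ Na, φ - ψ₀ ≫ Λ = τ ≫ a₂ := Triangle.coyoneda_exact₂ _ hTa (φ - ψ₀ ≫ Λ) (by
    show (φ - ψ₀ ≫ Λ) ≫ w = 0
    have h1 : φ ≫ w = c₁ ≫ c₂ ≫ ε := by
      rw [← hε₁, ← Category.assoc, hc, Category.assoc]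
    have h2 : (ψ₀ ≫ Λ) ≫ w = c₁ ≫ c₂ ≫ ε := by
      rw [Category.assoc, ← hΛ, ← Category.assoc, ← hψ₀]
    rw [Preadditive.sub_comp, h1, h2, sub_self])
  -- hτ : φ - ψ₀ ≫ Λ = τ ≫ a₂
  have hEq : φ = τ ≫ a₂ + ψ₀ ≫ Λ := by
    rw [← hτ]; abel
  rw [hEq]
  exact factorsThru_add N hNext ⟨Na, hNa, τ, a₂, rfl⟩ ⟨E, hE, ψ₀, Λ, rfl⟩

/-- Key lemma (A2): in a distinguished triangle `U ⟶ V ⟶ Z ⟶ U⟦1⟧` whose second map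
factors through `N`, any map out of `V` whose precomposition with `U ⟶ V` factors
through `N` itself factors through `N`. -/
lemma lemA2 (N : Set C)
    (hNiso : ∀ ⦃X Y : C⦄, (X ≅ Y) → X ∈ N → Y ∈ N)
    (hNext : ∀ (T : Triangle C), (T ∈ distTriang C) → T.obj₁ ∈ N → T.obj₃ ∈ N → T.obj₂ ∈ N)
    {U V Z : C} {a : U ⟶ V} {b : V ⟶ Z} {c : Z ⟶ U⟦(1:ℤ)⟧}
    (hT : Triangle.mk a b c ∈ distTriang C)
    (hb : FactorsThru N b) {X : C} {φ : V ⟶ X}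
    (hφ : FactorsThru N (a ≫ φ)) : FactorsThru N φ := by
  obtain ⟨Nb, hNb, b₁, b₂, hb2⟩ := hb
  obtain ⟨M, hM, c₁, c₂, hc⟩ := hφ
  obtain ⟨W₁, w, w', hTb⟩ := distinguished_cocone_triangle₁ b₁
  -- (W₁ ⟶w V ⟶b₁ Nb ⟶w' W₁⟦1⟧) distinguished
  obtain ⟨ε, hε⟩ : ∃ ε : W₁ ⟶ U, w = ε ≫ a := Triangle.coyoneda_exact₂ _ hT w (by
    show w ≫ b = 0
    rw [hb2, ← Category.assoc]
    have : w ≫ b₁ = 0 := comp_distTriang_mor_zero₁₂ _ hTb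
    rw [this, zero_comp])
  -- hε : w = ε ≫ a
  have hTbi := inv_rot_of_distTriang _ hTb
  set d' : Nb⟦(-1:ℤ)⟧ ⟶ W₁ := (Triangle.mk w b₁ w').invRotate.mor₁ with hd'
  have hd'w : d' ≫ w = 0 := comp_distTriang_mor_zero₁₂ _ hTbi
  obtain ⟨E, u, e', hTE⟩ := distinguished_cocone_triangle (d' ≫ ε ≫ c₁)
  have hE : E ∈ N := hNext _ (rot_of_distTriang _ hTE) hM
    (hNiso ((shiftEquiv C (1:ℤ)).counitIso.app Nb).symm hNb)
  have hδu : (d' ≫ ε ≫ c₁) ≫ u = 0 := comp_distTriang_mor_zero₁₂ _ hTE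
  obtain ⟨σ₀, hσ₀⟩ : ∃ σ₀ : E ⟶ X, c₂ = u ≫ σ₀ := Triangle.yoneda_exact₂ _ hTE c₂ (by
    show (d' ≫ ε ≫ c₁) ≫ c₂ = 0
    rw [Category.assoc, Category.assoc, ← hc, ← Category.assoc ε a, ← hε,
      ← Category.assoc, hd'w, zero_comp])
  -- hσ₀ : c₂ = u ≫ σ₀
  obtain ⟨Λ, hΛ⟩ : ∃ Λ : V ⟶ E, ε ≫ c₁ ≫ u = w ≫ Λ := Triangle.yoneda_exact₂ _ hTbi (ε ≫ c₁ ≫ u) (by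
    show d' ≫ ε ≫ c₁ ≫ u = 0
    simpa only [Category.assoc] using hδu)
  -- hΛ : ε ≫ c₁ ≫ u = w ≫ Λ
  obtain ⟨σ₁, hσ₁⟩ : ∃ σ₁ : Nb ⟶ X, φ - Λ ≫ σ₀ = b₁ ≫ σ₁ := Triangle.yoneda_exact₂ _ hTb (φ - Λ ≫ σ₀) (by
    show w ≫ (φ - Λ ≫ σ₀) = 0
    have h1 : w ≫ φ = ε ≫ c₁ ≫ c₂ := by
      rw [hε, Category.assoc, hc]
    have h2 : w ≫ Λ ≫ σ₀ = ε ≫ c₁ ≫ c₂ := by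
      rw [← Category.assoc, ← hΛ, Category.assoc, Category.assoc, ← hσ₀]
    rw [Preadditive.comp_sub, h1, h2, sub_self])
  -- hσ₁ : φ - Λ ≫ σ₀ = b₁ ≫ σ₁
  have hEq : φ = b₁ ≫ σ₁ + Λ ≫ σ₀ := by
    rw [← hσ₁]; abel
  rw [hEq]
  exact factorsThru_add N hNext ⟨Nb, hNb, b₁, σ₁, rfl⟩ ⟨E, hE, Λ, σ₀, rfl⟩


theorem stmt13 (N : Set C)
    (hN0 : ∀ X : C, Limits.IsZero X → X ∈ N)
    (hNiso : ∀ ⦃X Y : C⦄, (X ≅ Y) → X ∈ N → Y ∈ N)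
    (hNsum : ∀ ⦃X Z : C⦄ (i : X ⟶ Z) (r : Z ⟶ X), i ≫ r = 𝟙 X → Z ∈ N → X ∈ N)
    (hNext : ∀ (T : Triangle C), (T ∈ distTriang C) → T.obj₁ ∈ N → T.obj₃ ∈ N → T.obj₂ ∈ N)
    {A B C₀ : C} (s : A ⟶ B) (t : B ⟶ C₀) :
    (SN N s → SN N t → SN N (s ≫ t)) ∧
    (SN N s → SN N (s ≫ t) → SN N t) ∧
    (SN N t → SN N (s ≫ t) → SN N s) := by
  refine ⟨?_, ?_, ?_⟩
  · -- composition
    rintro ⟨X, x, x', hTs, hx, hx'⟩ ⟨Y, y, y', hTt, hy, hy'⟩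
    obtain ⟨W, w, w', hTst⟩ := distinguished_cocone_triangle₁ (s ≫ t)
    -- w factors through N
    have h1 : (w ≫ s) ≫ t = 0 := by
      rw [Category.assoc]
      exact comp_distTriang_mor_zero₁₂ _ hTst
    obtain ⟨ψ, hψ⟩ : ∃ ψ : W ⟶ Y, w ≫ s = ψ ≫ y := Triangle.coyoneda_exact₂ _ hTt (w ≫ s) h1
    have hws : FactorsThru N (w ≫ s) := by
      rw [hψ]; exact factorsThru_comp_left N ψ hy
    have hw : FactorsThru N w := lemA1 N hNext hTs hx hws
    -- w' factors through N
    obtain ⟨ψ', hψ'⟩ : ∃ ψ' : X⟦(1:ℤ)⟧ ⟶ W⟦(1:ℤ)⟧, t ≫ w' = x' ≫ ψ' := Triangle.yoneda_exact₂ _ (rot_of_distTriang _ hTs) (t ≫ w') (by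
      show s ≫ t ≫ w' = 0
      rw [← Category.assoc]
      exact comp_distTriang_mor_zero₂₃ _ hTst)
    have htw' : FactorsThru N (t ≫ w') := by
      rw [hψ']; exact factorsThru_comp_right N hx' ψ'
    have hw' : FactorsThru N w' :=
      lemA2 N hNiso hNext (rot_of_distTriang _ hTt) hy' htw'
    exact ⟨W, w, w', hTst, hw, hw'⟩
  · -- cancel s
    rintro ⟨X, x, x', hTs, hx, hx'⟩ ⟨W, w, w', hTst, hw, hw'⟩
    obtain ⟨Y, y, y', hTt⟩ := distinguished_cocone_triangle₁ t
    have hy' : FactorsThru N y' := by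
      refine lemA2 N hNiso hNext (rot_of_distTriang _ hTst) hw' ?_
      have h5 : t ≫ y' = 0 := comp_distTriang_mor_zero₂₃ _ hTt
      have h6 : (s ≫ t) ≫ y' = 0 := by rw [Category.assoc, h5, comp_zero]
      show FactorsThru N ((s ≫ t) ≫ y')
      rw [h6]
      exact factorsThru_zero N hN0
    obtain ⟨Nx', hNx', x'₁, x'₂, hx'e⟩ := hx'
    obtain ⟨G, g, g', hTG⟩ := distinguished_cocone_triangle₁ (y ≫ x'₁)
    have hgy : g ≫ y ≫ x'₁ = 0 := comp_distTriang_mor_zero₁₂ _ hTG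
    have h3 : (g ≫ y) ≫ x' = 0 := by
      rw [hx'e, ← Category.assoc, Category.assoc g, hgy, zero_comp]
    obtain ⟨η, hη⟩ : ∃ η : G ⟶ A, g ≫ y = η ≫ s := Triangle.coyoneda_exact₂ _ (rot_of_distTriang _ hTs) (g ≫ y) h3
    -- hη : g ≫ y = η ≫ s
    obtain ⟨θ, hθ⟩ : ∃ θ : G ⟶ W, η = θ ≫ w := Triangle.coyoneda_exact₂ _ hTst η (by
      have hyt : y ≫ t = 0 := comp_distTriang_mor_zero₁₂ _ hTt
      show η ≫ s ≫ t = 0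
      rw [← Category.assoc, ← hη, Category.assoc, hyt, comp_zero])
    -- hθ : η = θ ≫ w
    have hgyN : FactorsThru N (g ≫ y) := by
      rw [hη, hθ, Category.assoc]
      exact factorsThru_comp_left N θ (factorsThru_comp_right N hw s)
    have hyN : FactorsThru N y :=
      lemA2 N hNiso hNext hTG ⟨Nx', hNx', y ≫ x'₁, 𝟙 _, by simp⟩ hgyN
    exact ⟨Y, y, y', hTt, hyN, hy'⟩
  · -- cancel t
    rintro ⟨Y, y, y', hTt, hy, hy'⟩ ⟨W, w, w', hTst, hw, hw'⟩
    obtain ⟨X, x, x', hTs⟩ := distinguished_cocone_triangle₁ s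
    have hxN : FactorsThru N x := by
      refine lemA1 N hNext hTst hw ?_
      have hxs : x ≫ s = 0 := comp_distTriang_mor_zero₁₂ _ hTs
      have : x ≫ s ≫ t = 0 := by rw [← Category.assoc, hxs, zero_comp]
      show FactorsThru N (x ≫ (s ≫ t))
      rw [show x ≫ (s ≫ t) = 0 from this]
      exact factorsThru_zero N hN0
    obtain ⟨Nw', hNw', w'₁, w'₂, hw'e⟩ := hw'
    obtain ⟨U, u₀, u₀', hTU⟩ := distinguished_cocone_triangle₁ (t ≫ w'₁)
    have hu₀ : u₀ ≫ t ≫ w'₁ = 0 := comp_distTriang_mor_zero₁₂ _ hTU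
    have h4 : (u₀ ≫ t) ≫ w' = 0 := by
      rw [hw'e, ← Category.assoc, Category.assoc u₀, hu₀, zero_comp]
    obtain ⟨η, hη⟩ : ∃ η : U ⟶ A, u₀ ≫ t = η ≫ (s ≫ t) := Triangle.coyoneda_exact₂ _ (rot_of_distTriang _ hTst) (u₀ ≫ t) h4
    -- hη : u₀ ≫ t = η ≫ (s ≫ t)
    obtain ⟨ρ, hρ⟩ : ∃ ρ : U ⟶ Y, u₀ - η ≫ s = ρ ≫ y := Triangle.coyoneda_exact₂ _ hTt (u₀ - η ≫ s) (by
      show (u₀ - η ≫ s) ≫ t = 0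
      rw [Preadditive.sub_comp, Category.assoc, ← hη, sub_self])
    -- hρ : u₀ - η ≫ s = ρ ≫ y
    have hsx' : s ≫ x' = 0 := comp_distTriang_mor_zero₂₃ _ hTs
    have hux' : FactorsThru N (u₀ ≫ x') := by
      have hu : u₀ = ρ ≫ y + η ≫ s := by
        rw [← hρ]; abel
      have : u₀ ≫ x' = ρ ≫ y ≫ x' := by
        rw [hu, Preadditive.add_comp, Category.assoc, Category.assoc, hsx', comp_zero, add_zero]
      rw [this]
      exact factorsThru_comp_left N ρ (factorsThru_comp_right N hy x')
    have hx'N : FactorsThru N x' :=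
      lemA2 N hNiso hNext hTU ⟨Nw', hNw', t ≫ w'₁, 𝟙 _, by simp⟩ hux'
    exact ⟨X, x, x', hTs, hxN, hx'N⟩
end

section
/- Assume in addition that N is closed under the shift functor and its inverse (X ∈ N if and only if X⟦1⟧ ∈ N), so that N is a thick triangulated subcategory of C. Then a morphism s: B ⟶ C belongs to S_N if and only if there exists a distinguished triangle B ⟶s C ⟶ Z ⟶ B⟦1⟧ with Z ∈ N (i.e., s lies in the class of morphisms inverted by the Verdier quotient C ⟶ C/N). -/
open CategoryTheory CategoryTheory.Limits CategoryTheory.Pretriangulated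

universe v u v₂ u₂

variable {C : Type u} [Category.{v} C] [Preadditive C] [HasZeroObject C]
  [HasShift C ℤ] [∀ n : ℤ, (shiftFunctor C n).Additive] [Pretriangulated C]

theorem stmt14 (N : Set C)
    (hN0 : ∀ X : C, Limits.IsZero X → X ∈ N)
    (hNiso : ∀ ⦃X Y : C⦄, (X ≅ Y) → X ∈ N → Y ∈ N)
    (hNsum : ∀ ⦃X Z : C⦄ (i : X ⟶ Z) (r : Z ⟶ X), i ≫ r = 𝟙 X → Z ∈ N → X ∈ N)
    (hNext : ∀ (T : Triangle C), (T ∈ distTriang C) → T.obj₁ ∈ N → T.obj₃ ∈ N → T.obj₂ ∈ N)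
    (hshift : ∀ X : C, X ∈ N ↔ (X⟦(1:ℤ)⟧ : C) ∈ N)
    {B C₀ : C} (s : B ⟶ C₀) :
    SN N s ↔
      ∃ (Z : C) (_ : Z ∈ N) (p : C₀ ⟶ Z) (q : Z ⟶ B⟦(1:ℤ)⟧),
        Triangle.mk s p q ∈ distTriang C := by
  have hNshiftneg : ∀ X : C, X ∈ N → (X⟦(-1:ℤ)⟧ : C) ∈ N := fun X hX =>
    (hshift _).2 (hNiso ((shiftEquiv C (1:ℤ)).counitIso.app X).symm hX)
  have hNshiftneg' : ∀ X : C, X ∈ N → ((X⟦(-1:ℤ)⟧)⟦(1:ℤ)⟧ : C) ∈ N := fun X hX =>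
    hNiso ((shiftEquiv C (1:ℤ)).counitIso.app X).symm hX
  constructor
  · rintro ⟨A, f, h, hT, ⟨N₁, hN₁, u, v, hf⟩, ⟨N₂, hN₂, a, b, hh⟩⟩
    -- `w : N₂⟦-1⟧ ⟶ A` corresponds to `b : N₂ ⟶ A⟦1⟧`
    -- triangle over `w := descShift b`
    obtain ⟨K, k, l, hK⟩ := distinguished_cocone_triangle (descShift b)
    -- produce `m : B ⟶ K` with `f ≫ m = k`
    obtain ⟨m, hm₁, -⟩ := complete_distinguished_triangle_morphism
      ((Triangle.mk f s h).invRotate) (Triangle.mk (descShift b) k l)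
      (inv_rot_of_distTriang _ hT) hK (-(a⟦(-1:ℤ)⟧')) (𝟙 A)
      (by
        subst hh
        change (-((a ≫ b)⟦(-1:ℤ)⟧' ≫
            (id ((shiftEquiv C (1:ℤ)).unitIso.inv.app A) : (A⟦(1:ℤ)⟧)⟦(-1:ℤ)⟧ ⟶ A))) ≫ 𝟙 A =
          (-(a⟦(-1:ℤ)⟧')) ≫
            (b⟦(-1:ℤ)⟧' ≫ (id ((shiftEquiv C (1:ℤ)).unitIso.inv.app A) : (A⟦(1:ℤ)⟧)⟦(-1:ℤ)⟧ ⟶ A))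
        rw [Functor.map_comp, Category.assoc, Preadditive.neg_comp]
        rw [Category.comp_id, Preadditive.neg_comp])
    change B ⟶ K at m
    change f ≫ m = 𝟙 A ≫ k at hm₁
    have hk : f ≫ m = k := by simpa using hm₁
    -- triangle over `descShift b ≫ u`
    obtain ⟨M, i, j, hM⟩ := distinguished_cocone_triangle (descShift b ≫ u)
    have hMmem : M ∈ N := hNext _ (rot_of_distTriang _ hM) hN₁ (hNshiftneg' _ hN₂)
    -- `t : K ⟶ M`
    obtain ⟨t, ht₁, ht₂⟩ := complete_distinguished_triangle_morphism
      (Triangle.mk (descShift b) k l) (Triangle.mk (descShift b ≫ u) i j)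
      hK hM (𝟙 _) u (by exact (Category.id_comp _).symm)
    change K ⟶ M at t
    change k ≫ t = u ≫ i at ht₁
    change l ≫ (shiftFunctor C (1:ℤ)).map (𝟙 (N₂⟦(-1:ℤ)⟧)) = t ≫ j at ht₂
    have ht₂' : t ≫ j = l := by simpa using ht₂.symm
    -- `ρ : M ⟶ K` with `i ≫ ρ = v ≫ m`
    obtain ⟨ρ, hρ⟩ := Triangle.yoneda_exact₂ _ hM (v ≫ m)
      (by
        have h0 := comp_distTriang_mor_zero₁₂ _ hK
        change descShift b ≫ k = 0 at h0
        change (descShift b ≫ u) ≫ v ≫ m = 0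
        rw [Category.assoc, ← Category.assoc u v, ← hf, hk, h0])
    change M ⟶ K at ρ
    change v ≫ m = i ≫ ρ at hρ
    -- `σ : N₂⟦-1⟧⟦1⟧ ⟶ K` with `𝟙 K - t ≫ ρ = l ≫ σ`
    obtain ⟨σ, hσ⟩ := Triangle.yoneda_exact₃ _ hK (𝟙 K - t ≫ ρ)
      (by
        change k ≫ (𝟙 K - t ≫ ρ) = 0
        rw [Preadditive.comp_sub, Category.comp_id, ← Category.assoc, ht₁,
          Category.assoc, ← hρ, ← Category.assoc, ← hf, hk, sub_self])
    change (N₂⟦(-1:ℤ)⟧)⟦(1:ℤ)⟧ ⟶ K at σ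
    change 𝟙 K - t ≫ ρ = l ≫ σ at hσ
    -- `K` is a retract of `M ⊞ N₂⟦-1⟧⟦1⟧ ∈ N`
    have hbiprod : (M ⊞ ((N₂⟦(-1:ℤ)⟧)⟦(1:ℤ)⟧) : C) ∈ N :=
      hNext _ (binaryBiproductTriangle_distinguished M ((N₂⟦(-1:ℤ)⟧)⟦(1:ℤ)⟧))
        hMmem (hNshiftneg' _ hN₂)
    have hKmem : K ∈ N := by
      refine hNsum (biprod.lift t l) (biprod.desc ρ σ) ?_ hbiprod
      rw [biprod.lift_desc, ← hσ, add_sub_cancel]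
    -- hence `A ∈ N`
    have hA : A ∈ N := hNext _ hK (hNshiftneg _ hN₂) hKmem
    exact ⟨A⟦(1:ℤ)⟧, (hshift A).1 hA, h, -f⟦(1:ℤ)⟧', rot_of_distTriang _ hT⟩
  · rintro ⟨Z, hZ, p, q, hT⟩
    refine ⟨Z⟦(-1:ℤ)⟧, -q⟦(-1:ℤ)⟧' ≫ (shiftEquiv C (1:ℤ)).unitIso.inv.app B,
      p ≫ (shiftEquiv C (1:ℤ)).counitIso.inv.app Z, inv_rot_of_distTriang _ hT,
      ⟨Z⟦(-1:ℤ)⟧, hNshiftneg _ hZ, 𝟙 _, _, (Category.id_comp _).symm⟩,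
      ⟨Z, hZ, p, (shiftEquiv C (1:ℤ)).counitIso.inv.app Z, rfl⟩⟩
end

section
/- Let A ⟶f B ⟶g C ⟶h A⟦1⟧ be a distinguished triangle in C whose connecting morphism h satisfies both condition (Lex) and condition (Rex). If A and B belong to N, then C belongs to N; and if B and C belong to N, then A belongs to N. (Thus N is a thick subcategory of the relative extriangulated structure determined by (Lex) and (Rex).) -/
open CategoryTheory CategoryTheory.Limits CategoryTheory.Pretriangulated

universe v u v₂ u₂

variable {C : Type u} [Category.{v} C] [Preadditive C] [HasZeroObject C]
  [HasShift C ℤ] [∀ n : ℤ, (shiftFunctor C n).Additive] [Pretriangulated C]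

section Auxiliary

/-- Key lemma A: in a distinguished triangle, if the second morphism factors through `N`
and the shift of the first object is in `N`, then the third object is in `N`. -/
private lemma stmt16_lemA (N : Set C)
    (hNsum : ∀ ⦃X Z : C⦄ (i : X ⟶ Z) (r : Z ⟶ X), i ≫ r = 𝟙 X → Z ∈ N → X ∈ N)
    (hNext : ∀ (T : Triangle C), (T ∈ distTriang C) → T.obj₁ ∈ N → T.obj₃ ∈ N → T.obj₂ ∈ N)
    (T : Triangle C) (hT : T ∈ distTriang C)
    (Z : C) (hZ : Z ∈ N) (u : T.obj₂ ⟶ Z) (v : Z ⟶ T.obj₃) (hfac : T.mor₂ = u ≫ v)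
    (hX : ((T.obj₁)⟦(1:ℤ)⟧ : C) ∈ N) : T.obj₃ ∈ N := by
  obtain ⟨Y, α, β, hTY⟩ := distinguished_cocone_triangle (T.mor₁ ≫ u)
  have hY : Y ∈ N := hNext _ (rot_of_distTriang _ hTY) hZ hX
  obtain ⟨Q, p, q, hTv⟩ := distinguished_cocone_triangle v
  have h0 : (T.mor₁ ≫ u) ≫ v = 0 := by
    rw [Category.assoc, ← hfac]
    exact comp_distTriang_mor_zero₁₂ T hT
  obtain ⟨τ, hτ⟩ := Triangle.coyoneda_exact₂ _ (inv_rot_of_distTriang _ hTv)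
    (T.mor₁ ≫ u) (by exact h0)
  obtain ⟨φ₀, hφ1, hφ2⟩ := complete_distinguished_triangle_morphism T _ hT hTY
    (𝟙 T.obj₁) u (by exact (Category.id_comp _).symm)
  obtain ⟨ψ₀, hψ1, hψ2⟩ := complete_distinguished_triangle_morphism _ _ hTY
    (inv_rot_of_distTriang _ hTv) τ (𝟙 Z) (by exact (Category.comp_id _).trans hτ)
  change Y ⟶ T.obj₃ at ψ₀
  change T.obj₃ ⟶ Y at φ₀
  change T.mor₂ ≫ φ₀ = u ≫ α at hφ1
  change α ≫ ψ₀ = 𝟙 Z ≫ v at hψ1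
  rw [Category.id_comp] at hψ1
  have hζ : T.mor₂ ≫ (𝟙 T.obj₃ - φ₀ ≫ ψ₀) = 0 := by
    rw [Preadditive.comp_sub, Category.comp_id, ← Category.assoc, hφ1, Category.assoc, hψ1,
      ← hfac, sub_self]
  obtain ⟨ξ, hξ⟩ := Triangle.yoneda_exact₃ T hT _ hζ
  have hYB : (Y ⊞ ((T.obj₁)⟦(1:ℤ)⟧ : C)) ∈ N :=
    hNext _ (binaryBiproductTriangle_distinguished Y _) hY hX
  refine hNsum (biprod.lift φ₀ T.mor₃) (biprod.desc ψ₀ ξ) ?_ hYB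
  rw [biprod.lift_desc, ← hξ]
  abel

/-- Key lemma B: in a distinguished triangle, if the second morphism factors through `N`
and the first object is in `N`, then the second object is in `N`. -/
private lemma stmt16_lemB (N : Set C)
    (hNiso : ∀ ⦃X Y : C⦄, (X ≅ Y) → X ∈ N → Y ∈ N)
    (hNsum : ∀ ⦃X Z : C⦄ (i : X ⟶ Z) (r : Z ⟶ X), i ≫ r = 𝟙 X → Z ∈ N → X ∈ N)
    (hNext : ∀ (T : Triangle C), (T ∈ distTriang C) → T.obj₁ ∈ N → T.obj₃ ∈ N → T.obj₂ ∈ N)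
    (T : Triangle C) (hT : T ∈ distTriang C)
    (Z : C) (hZ : Z ∈ N) (u : T.obj₂ ⟶ Z) (v : Z ⟶ T.obj₃) (hfac : T.mor₂ = u ≫ v)
    (hV : T.obj₁ ∈ N) : T.obj₂ ∈ N := by
  obtain ⟨G, α₁, β₁, hG⟩ := distinguished_cocone_triangle (v ≫ T.mor₃)
  have hTY' := inv_rot_of_distTriang _ hG
  have hY' : ((G : C)⟦(-1:ℤ)⟧ : C) ∈ N := by
    refine hNext _ (inv_rot_of_distTriang _ hTY') ?_ hZ
    exact hNiso ((shiftEquiv C (1:ℤ)).unitIso.app T.obj₁) hV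
  have h1 : u ≫ (Triangle.mk (v ≫ T.mor₃) α₁ β₁).invRotate.mor₂ = 0 := by
    change u ≫ v ≫ T.mor₃ = 0
    rw [← Category.assoc, ← hfac]
    exact comp_distTriang_mor_zero₂₃ T hT
  obtain ⟨φ, hφ⟩ := Triangle.coyoneda_exact₂ _ hTY' u h1
  obtain ⟨c, hc1, hc2⟩ := complete_distinguished_triangle_morphism
    ((Triangle.mk (v ≫ T.mor₃) α₁ β₁).invRotate.rotate) (T.rotate.rotate)
    (rot_of_distTriang _ hTY') (rot_of_distTriang _ (rot_of_distTriang _ hT))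
    v (𝟙 _) (by exact Category.comp_id _)
  change (G⟦(-1:ℤ)⟧⟦(1:ℤ)⟧ : C) ⟶ (T.obj₂⟦(1:ℤ)⟧ : C) at c
  change (-((shiftFunctor C (1:ℤ)).map (Triangle.mk (v ≫ T.mor₃) α₁ β₁).invRotate.mor₁)) ≫ (shiftFunctor C (1:ℤ)).map v = c ≫ (-((shiftFunctor C (1:ℤ)).map T.mor₂)) at hc2
  set ψ : (G : C)⟦(-1:ℤ)⟧ ⟶ T.obj₂ := (shiftFunctor C (1:ℤ)).preimage c with hψdef
  have hcψ : (shiftFunctor C (1:ℤ)).map ψ = c := Functor.map_preimage _ _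
  have hψ : ((Triangle.mk (v ≫ T.mor₃) α₁ β₁).invRotate.mor₁) ≫ v = ψ ≫ T.mor₂ := by
    apply (shiftFunctor C (1:ℤ)).map_injective
    erw [Functor.map_comp, Functor.map_comp, hcψ]
    rw [Preadditive.neg_comp, Preadditive.comp_neg] at hc2
    dsimp only [Triangle.invRotate, Triangle.mk] at hc2 ⊢
    exact neg_inj.mp hc2
  have hζ : (𝟙 T.obj₂ - φ ≫ ψ) ≫ T.mor₂ = 0 := by
    erw [Preadditive.sub_comp, Category.id_comp, Category.assoc, ← hψ,
      ← Category.assoc, ← hφ, ← hfac, sub_self]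
  obtain ⟨ξ, hξ⟩ := Triangle.coyoneda_exact₂ T hT _ hζ
  have hYB : (((G : C)⟦(-1:ℤ)⟧ : C) ⊞ T.obj₁) ∈ N :=
    hNext _ (binaryBiproductTriangle_distinguished _ _) hY' hV
  refine hNsum (biprod.lift φ ξ) (biprod.desc ψ T.mor₁) ?_ hYB
  erw [biprod.lift_desc, ← hξ]
  abel

/-- Unshifting a factorization of `descShift h`. -/
private lemma stmt16_unshift {C₀ A M : C} (h : C₀ ⟶ A⟦(1:ℤ)⟧)
    (u : (C₀⟦(-1:ℤ)⟧ : C) ⟶ (M⟦(-1:ℤ)⟧ : C)) (v : (M⟦(-1:ℤ)⟧ : C) ⟶ A)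
    (huv : descShift h = u ≫ v) :
    ∃ (u₁ : C₀ ⟶ M) (v₁ : M ⟶ (A⟦(1:ℤ)⟧ : C)), h = u₁ ≫ v₁ := by
  set u₁ := (shiftFunctor C (-1:ℤ)).preimage u with hu₁def
  have hu₁ : (shiftFunctor C (-1:ℤ)).map u₁ = u := Functor.map_preimage _ _
  set ι := (shiftEquiv' C (-1:ℤ) (1:ℤ) (by omega)).unitIso with hιdef
  set θ : (A⟦(1:ℤ)⟧ : C) ⟶ (A⟦(1:ℤ)⟧ : C) :=
    ι.hom.app (A⟦(1:ℤ)⟧) ≫ ((shiftEquiv C (1:ℤ)).unitIso.symm.hom.app A)⟦(1:ℤ)⟧' with hθdef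
  have hθ : IsIso θ := by
    rw [hθdef]
    exact Iso.isIso_hom (ι.app _ ≪≫ (shiftFunctor C (1:ℤ)).mapIso ((shiftEquiv C (1:ℤ)).unitIso.symm.app A))
  have key : u₁ ≫ ι.hom.app M ≫ (shiftFunctor C (1:ℤ)).map v = h ≫ θ := by
    have n1 := ι.hom.naturality u₁
    have n2 := ι.hom.naturality h
    dsimp at n1 n2
    erw [← Category.assoc, n1, Category.assoc, ← Functor.map_comp, hu₁, ← huv]
    have : (shiftFunctor C (1:ℤ)).map (descShift h) =
        (shiftFunctor C (1:ℤ)).map ((shiftFunctor C (-1:ℤ)).map h) ≫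
        ((shiftEquiv C (1:ℤ)).unitIso.symm.hom.app A)⟦(1:ℤ)⟧' := by
      dsimp [descShift]
      erw [Functor.map_comp]
    erw [this, ← Category.assoc, ← n2, hθdef, Category.assoc]
    rfl
  refine ⟨u₁, (ι.hom.app M ≫ (shiftFunctor C (1:ℤ)).map v) ≫ inv θ, ?_⟩
  rw [← Category.assoc, key, Category.assoc, IsIso.hom_inv_id, Category.comp_id]

end Auxiliary

theorem stmt16 (N : Set C)
    (hN0 : ∀ X : C, Limits.IsZero X → X ∈ N)
    (hNiso : ∀ ⦃X Y : C⦄, (X ≅ Y) → X ∈ N → Y ∈ N)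
    (hNsum : ∀ ⦃X Z : C⦄ (i : X ⟶ Z) (r : Z ⟶ X), i ≫ r = 𝟙 X → Z ∈ N → X ∈ N)
    (hNext : ∀ (T : Triangle C), (T ∈ distTriang C) → T.obj₁ ∈ N → T.obj₃ ∈ N → T.obj₂ ∈ N)
    {A B C₀ : C} (f : A ⟶ B) (g : B ⟶ C₀) (h : C₀ ⟶ A⟦(1:ℤ)⟧)
    (hT : Triangle.mk f g h ∈ distTriang C)
    (hLex : LexCond N h) (hRex : RexCond N h) :
    (A ∈ N → B ∈ N → C₀ ∈ N) ∧ (B ∈ N → C₀ ∈ N → A ∈ N) := by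
  constructor
  · -- A, B ∈ N ⇒ C₀ ∈ N, using (Rex) at y = 𝟙 A.
    intro hA hB
    obtain ⟨M, hM, u, v, huv⟩ := hRex A hA (𝟙 A)
    rw [Category.comp_id] at huv
    obtain ⟨u₁, v₁, hfac⟩ := stmt16_unshift h u v huv
    exact stmt16_lemB N hNiso hNsum hNext (Triangle.mk f g h).rotate
      (rot_of_distTriang _ hT) M hM u₁ v₁ hfac hB
  · -- B, C₀ ∈ N ⇒ A ∈ N, using (Lex) at x = 𝟙 C₀.
    intro hB hC
    have hl := hLex C₀ hC (𝟙 C₀)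
    rw [Category.id_comp] at hl
    obtain ⟨Z, hZ, u, v, huv⟩ := hl
    refine stmt16_lemA N hNsum hNext ((Triangle.mk f g h).invRotate.invRotate)
      (inv_rot_of_distTriang _ (inv_rot_of_distTriang _ hT)) Z hZ (-u) v ?_ ?_
    · show (Triangle.mk f g h).invRotate.mor₁ = (-u) ≫ v
      change -(descShift h) = (-u) ≫ v
      rw [Preadditive.neg_comp, neg_inj, ← huv]
    · exact hNiso ((shiftEquiv' C (-1:ℤ) (1:ℤ) (by omega)).unitIso.app B) hB
end

section
/- Let A ⟶f B ⟶g C ⟶h A⟦1⟧ be a distinguished triangle in C whose connecting morphism h satisfies both condition (Lex) and condition (Rex). If A belongs to N, then g belongs to S_N; and if C belongs to N, then f belongs to S_N. -/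
open CategoryTheory CategoryTheory.Limits CategoryTheory.Pretriangulated

universe v u v₂ u₂

variable {C : Type u} [Category.{v} C] [Preadditive C] [HasZeroObject C]
  [HasShift C ℤ] [∀ n : ℤ, (shiftFunctor C n).Additive] [Pretriangulated C]

lemma h_eq' {X A : C} (h : X ⟶ A⟦(1:ℤ)⟧) :
    h = (shiftEquiv C (1:ℤ)).counitIso.inv.app X ≫ (descShift h)⟦(1:ℤ)⟧' := by
  simp only [descShift, Functor.map_comp]
  erw [Functor.map_comp, ← Category.assoc, ← NatTrans.naturality (shiftEquiv C (1:ℤ)).counitIso.inv h]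
  simp only [Functor.id_map]
  erw [Category.assoc, Equivalence.counitInv_functor_comp]
  erw [Category.comp_id]

theorem stmt17 (N : Set C)
    (hN0 : ∀ X : C, Limits.IsZero X → X ∈ N)
    (hNiso : ∀ ⦃X Y : C⦄, (X ≅ Y) → X ∈ N → Y ∈ N)
    (hNsum : ∀ ⦃X Z : C⦄ (i : X ⟶ Z) (r : Z ⟶ X), i ≫ r = 𝟙 X → Z ∈ N → X ∈ N)
    (hNext : ∀ (T : Triangle C), (T ∈ distTriang C) → T.obj₁ ∈ N → T.obj₃ ∈ N → T.obj₂ ∈ N)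
    {A B C₀ : C} (f : A ⟶ B) (g : B ⟶ C₀) (h : C₀ ⟶ A⟦(1:ℤ)⟧)
    (hT : Triangle.mk f g h ∈ distTriang C)
    (hLex : LexCond N h) (hRex : RexCond N h) :
    (A ∈ N → SN N g) ∧ (C₀ ∈ N → SN N f) := by
  constructor
  · intro hA
    obtain ⟨M, hM, u, v, huv⟩ := hRex A hA (𝟙 A)
    rw [Category.comp_id] at huv
    refine ⟨A, f, h, hT, ⟨A, hA, 𝟙 A, f, by simp⟩,
      ⟨M⟦(-1:ℤ)⟧⟦(1:ℤ)⟧, hNiso ((shiftEquiv C (1:ℤ)).counitIso.app M).symm hM,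
        (shiftEquiv C (1:ℤ)).counitIso.inv.app C₀ ≫ u⟦(1:ℤ)⟧', v⟦(1:ℤ)⟧', ?_⟩⟩
    rw [h_eq' h, huv]
    exact (congrArg _ (Functor.map_comp _ _ _)).trans (Category.assoc _ _ _).symm
  · intro hC
    obtain ⟨Z, hZ, u, v, e⟩ := hLex C₀ hC (𝟙 C₀)
    simp only [Category.id_comp] at e
    refine ⟨C₀⟦(-1:ℤ)⟧,
      -h⟦(-1:ℤ)⟧' ≫ (shiftEquiv C (1:ℤ)).unitIso.inv.app A,
      g ≫ (shiftEquiv C (1:ℤ)).counitIso.inv.app C₀,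
      inv_rot_of_distTriang _ hT,
      ⟨Z, hZ, -u, v, ?_⟩,
      ⟨C₀, hC, g, (shiftEquiv C (1:ℤ)).counitIso.inv.app C₀, rfl⟩⟩
    rw [Preadditive.neg_comp, ← e]
    rfl
end

section
/- Assume Cone(N,N) = C, i.e., for every object X of C there exists a distinguished triangle N' ⟶ N₀ ⟶ X ⟶ N'⟦1⟧ with N₀, N' ∈ N. Then for any distinguished triangle A ⟶f B ⟶g C ⟶h A⟦1⟧ whose connecting morphism h satisfies both condition (Lex) and condition (Rex), the morphism h factors through an object of N, and the shifted morphism h⟦-1⟧: C⟦-1⟧ ⟶ A also factors through an object of N. -/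
open CategoryTheory CategoryTheory.Limits CategoryTheory.Pretriangulated

universe v u v₂ u₂

variable {C : Type u} [Category.{v} C] [Preadditive C] [HasZeroObject C]
  [HasShift C ℤ] [∀ n : ℤ, (shiftFunctor C n).Additive] [Pretriangulated C]

section Auxiliary

set_option linter.unusedSectionVars false

lemma FactorsThru.descShift_comp {X Y A : C} (x : X ⟶ Y) (h : Y ⟶ A⟦(1:ℤ)⟧) :
    descShift (x ≫ h) = x⟦(-1:ℤ)⟧' ≫ descShift h := by
  simp [descShift]

lemma FactorsThru.shift_conj {C₀ A K' M : C} (h : C₀ ⟶ A⟦(1:ℤ)⟧) (y : A ⟶ K')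
    (u : C₀⟦(-1:ℤ)⟧ ⟶ M⟦(-1:ℤ)⟧) (v : M⟦(-1:ℤ)⟧ ⟶ K')
    (eq : descShift h ≫ y = u ≫ v) :
    h ≫ y⟦(1:ℤ)⟧' = ((shiftEquiv C (1:ℤ)).counitIso.inv.app C₀ ≫ u⟦(1:ℤ)⟧') ≫ v⟦(1:ℤ)⟧' := by
  have nat : (shiftEquiv C (1:ℤ)).counitIso.inv.app C₀ ≫ (h⟦(-1:ℤ)⟧')⟦(1:ℤ)⟧'
      = h ≫ (shiftEquiv C (1:ℤ)).counitIso.inv.app (A⟦(1:ℤ)⟧) :=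
    ((shiftEquiv C (1:ℤ)).counitIso.inv.naturality h).symm
  have tri : (shiftEquiv C (1:ℤ)).counitIso.inv.app (A⟦(1:ℤ)⟧)
      ≫ ((shiftEquiv C (1:ℤ)).unitIso.inv.app A)⟦(1:ℤ)⟧' = 𝟙 _ :=
    (shiftEquiv C (1:ℤ)).counitInv_functor_comp A
  change (h⟦(-1:ℤ)⟧' ≫ (shiftFunctorCompIsoId C (1:ℤ) (-1) (by omega)).hom.app A) ≫ y = u ≫ v at eq
  change h ≫ y⟦(1:ℤ)⟧' = ((shiftFunctorCompIsoId C (-1:ℤ) 1 (by omega)).inv.app C₀ ≫ u⟦(1:ℤ)⟧') ≫ v⟦(1:ℤ)⟧'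
  rw [Category.assoc, ← Functor.map_comp, ← eq]
  simp [shift_shiftFunctorCompIsoId_hom_app]

lemma FactorsThru.add (N : Set C)
    (hNiso : ∀ ⦃X Y : C⦄, (X ≅ Y) → X ∈ N → Y ∈ N)
    (hNext : ∀ (T : Triangle C), (T ∈ distTriang C) → T.obj₁ ∈ N → T.obj₃ ∈ N → T.obj₂ ∈ N)
    {X Y : C} (f₁ f₂ : X ⟶ Y) (h₁ : FactorsThru N f₁) (h₂ : FactorsThru N f₂) :
    FactorsThru N (f₁ + f₂) := by
  obtain ⟨Z₁, hZ₁, u₁, v₁, rfl⟩ := h₁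
  obtain ⟨Z₂, hZ₂, u₂, v₂, rfl⟩ := h₂
  obtain ⟨W, g, δ, hW⟩ := distinguished_cocone_triangle (0 : Z₂⟦(-1:ℤ)⟧ ⟶ Z₁)
  have hWrot := rot_of_distTriang _ hW
  have hWN : W ∈ N := hNext _ hWrot hZ₁
    (hNiso ((shiftEquiv C (1:ℤ)).counitIso.app Z₂).symm hZ₂)
  obtain ⟨ret, hret⟩ := Triangle.yoneda_exact₂ _ hW (𝟙 Z₁) (by exact zero_comp)
  obtain ⟨s₀, hs₀⟩ := Triangle.coyoneda_exact₃ _ hWrot (𝟙 (Z₂⟦(-1:ℤ)⟧⟦(1:ℤ)⟧)) (by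
    change 𝟙 _ ≫ (-((0 : Z₂⟦(-1:ℤ)⟧ ⟶ Z₁)⟦(1:ℤ)⟧')) = 0
    simp)
  change W ⟶ Z₁ at ret
  change Z₂⟦(-1:ℤ)⟧⟦(1:ℤ)⟧ ⟶ W at s₀
  change 𝟙 Z₁ = g ≫ ret at hret
  change 𝟙 _ = s₀ ≫ δ at hs₀
  have hgδ : g ≫ δ = 0 := comp_distTriang_mor_zero₂₃ _ hW
  set s₁ : Z₂⟦(-1:ℤ)⟧⟦(1:ℤ)⟧ ⟶ W := s₀ - s₀ ≫ ret ≫ g with hs₁def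
  have hs₁δ : s₁ ≫ δ = 𝟙 _ := by
    rw [hs₁def, Preadditive.sub_comp, Category.assoc, Category.assoc, hgδ, comp_zero,
      comp_zero, sub_zero, ← hs₀]
  have hs₁ret : s₁ ≫ ret = 0 := by
    rw [hs₁def, Preadditive.sub_comp, Category.assoc, Category.assoc, ← hret,
      Category.comp_id, sub_self]
  set θ : Z₂⟦(-1:ℤ)⟧⟦(1:ℤ)⟧ ≅ Z₂ := (shiftEquiv C (1:ℤ)).counitIso.app Z₂
  refine ⟨W, hWN, u₁ ≫ g + u₂ ≫ θ.inv ≫ s₁, ret ≫ v₁ + δ ≫ θ.hom ≫ v₂, ?_⟩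
  simp only [Preadditive.add_comp, Preadditive.comp_add, Category.assoc]
  rw [reassoc_of% hgδ, reassoc_of% hs₁δ, reassoc_of% hs₁ret, ← reassoc_of% hret]
  simp

lemma FactorsThru.of_rex (N : Set C)
    (hNiso : ∀ ⦃X Y : C⦄, (X ≅ Y) → X ∈ N → Y ∈ N)
    (hNext : ∀ (T : Triangle C), (T ∈ distTriang C) → T.obj₁ ∈ N → T.obj₃ ∈ N → T.obj₂ ∈ N)
    {A C₀ : C} (h : C₀ ⟶ A⟦(1:ℤ)⟧) (hRex : RexCond N h)
    {K' K₀ : C} (hK' : K' ∈ N) (hK₀ : K₀ ∈ N)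
    (u₀ : K' ⟶ K₀) (p : K₀ ⟶ A⟦(1:ℤ)⟧) (w₀ : A⟦(1:ℤ)⟧ ⟶ K'⟦(1:ℤ)⟧)
    (hTK : Triangle.mk u₀ p w₀ ∈ distTriang C) :
    FactorsThru N h := by
  have hTK2 : Triangle.mk p w₀ (-u₀⟦(1:ℤ)⟧') ∈ distTriang C := rot_of_distTriang _ hTK
  obtain ⟨y, hy⟩ := (shiftFunctor C (1:ℤ)).map_surjective w₀
  obtain ⟨M, hM, u, v, huv⟩ := hRex K' hK' y
  set Z := M⟦(-1:ℤ)⟧⟦(1:ℤ)⟧ with hZdef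
  have hZ : Z ∈ N := hNiso ((shiftEquiv C (1:ℤ)).counitIso.app M).symm hM
  set s : C₀ ⟶ Z := (shiftEquiv C (1:ℤ)).counitIso.inv.app C₀ ≫ u⟦(1:ℤ)⟧' with hsdef
  set t : Z ⟶ K'⟦(1:ℤ)⟧ := v⟦(1:ℤ)⟧' with htdef
  have key : h ≫ w₀ = s ≫ t := by
    rw [← hy]; exact FactorsThru.shift_conj h y u v huv
  obtain ⟨F, fF, gF, hTF⟩ :=
    distinguished_cocone_triangle₂ (t ≫ (-u₀⟦(1:ℤ)⟧' : K'⟦(1:ℤ)⟧ ⟶ K₀⟦(1:ℤ)⟧))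
  have hFN : F ∈ N := hNext _ hTF hK₀ hZ
  have hw₀δ : w₀ ≫ (-u₀⟦(1:ℤ)⟧') = 0 := comp_distTriang_mor_zero₂₃ _ hTK2
  obtain ⟨σ, hσ⟩ := Triangle.coyoneda_exact₃ _ hTF s (by
    change s ≫ (t ≫ (-u₀⟦(1:ℤ)⟧')) = 0
    rw [← Category.assoc, ← key, Category.assoc, hw₀δ, comp_zero])
  change C₀ ⟶ F at σ
  change s = σ ≫ gF at hσ
  have hgFtδ : gF ≫ t ≫ (-u₀⟦(1:ℤ)⟧') = 0 := comp_distTriang_mor_zero₂₃ _ hTF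
  obtain ⟨r, hr⟩ := Triangle.coyoneda_exact₃ _ hTK2 (gF ≫ t) (by
    change (gF ≫ t) ≫ (-u₀⟦(1:ℤ)⟧') = 0
    rw [Category.assoc, hgFtδ])
  change F ⟶ A⟦(1:ℤ)⟧ at r
  change gF ≫ t = r ≫ w₀ at hr
  have hσrw : σ ≫ r ≫ w₀ = s ≫ t := by
    rw [← hr, ← Category.assoc, ← hσ]
  obtain ⟨e, he⟩ := Triangle.coyoneda_exact₂ _ hTK2 (h - σ ≫ r) (by
    change (h - σ ≫ r) ≫ w₀ = 0
    rw [Preadditive.sub_comp, Category.assoc, hσrw, key, sub_self])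
  change C₀ ⟶ K₀ at e
  change h - σ ≫ r = e ≫ p at he
  have hsplit : h = σ ≫ r + e ≫ p := by rw [← he]; abel
  rw [hsplit]
  exact FactorsThru.add N hNiso hNext _ _ ⟨F, hFN, σ, r, rfl⟩ ⟨K₀, hK₀, e, p, rfl⟩

lemma FactorsThru.of_lex (N : Set C)
    (hNiso : ∀ ⦃X Y : C⦄, (X ≅ Y) → X ∈ N → Y ∈ N)
    (hNext : ∀ (T : Triangle C), (T ∈ distTriang C) → T.obj₁ ∈ N → T.obj₃ ∈ N → T.obj₂ ∈ N)
    {A C₀ : C} (h : C₀ ⟶ A⟦(1:ℤ)⟧) (hLex : LexCond N h)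
    {L' L₀ : C} (hL' : L' ∈ N) (hL₀ : L₀ ∈ N)
    (u₁ : L' ⟶ L₀) (x : L₀ ⟶ C₀) (w₁ : C₀ ⟶ L'⟦(1:ℤ)⟧)
    (hTL : Triangle.mk u₁ x w₁ ∈ distTriang C) :
    FactorsThru N (descShift h) := by
  set T₃ := (Triangle.mk u₁ x w₁).invRotate.invRotate.invRotate with hT₃def
  have hT₃ : T₃ ∈ distTriang C :=
    inv_rot_of_distTriang _ (inv_rot_of_distTriang _ (inv_rot_of_distTriang _ hTL))
  have tri2 : (shiftFunctor C (-1:ℤ)).map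
        ((shiftFunctorCompIsoId C (-1:ℤ) (1:ℤ) (by omega)).inv.app C₀)
      ≫ (shiftFunctorCompIsoId C (1:ℤ) (-1:ℤ) (by omega)).hom.app (C₀⟦(-1:ℤ)⟧) = 𝟙 _ :=
    (shiftEquiv C (1:ℤ)).inverse_counitInv_comp C₀
  have hmor₂ : T₃.mor₂ = -(x⟦(-1:ℤ)⟧') := by
    change ((Triangle.mk u₁ x w₁).invRotate.invRotate.invRotate).mor₂ = _
    change -((x ≫ (shiftFunctorCompIsoId C (-1:ℤ) 1 (by omega)).inv.app C₀)⟦(-1:ℤ)⟧') ≫ (shiftFunctorCompIsoId C (1:ℤ) (-1:ℤ) (by omega)).hom.app (C₀⟦(-1:ℤ)⟧) = -(x⟦(-1:ℤ)⟧')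
    rw [Functor.map_comp, Category.assoc, tri2]; simp
  obtain ⟨Z₁, hZ₁, a, b, hab⟩ := hLex L₀ hL₀ x
  have hxφ : x⟦(-1:ℤ)⟧' ≫ descShift h = a ≫ b := by
    rw [← FactorsThru.descShift_comp, hab]
  have hm₂φ : T₃.mor₂ ≫ descShift h = (-a) ≫ b := by
    rw [hmor₂]
    exact (Preadditive.neg_comp (f := x⟦(-1:ℤ)⟧') (g := descShift h)).trans ((congrArg Neg.neg hxφ).trans (Preadditive.neg_comp (f := a) (g := b)).symm)
  obtain ⟨E, jE, kE, hTE⟩ := distinguished_cocone_triangle (T₃.mor₁ ≫ (-a))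
  have hEN : E ∈ N := hNext _ (rot_of_distTriang _ hTE) hZ₁
    (hNiso ((shiftEquiv C (1:ℤ)).counitIso.app L').symm hL')
  obtain ⟨ρ, hρ⟩ := Triangle.yoneda_exact₂ _ hTE b (by
    exact (Category.assoc T₃.mor₁ (-a) b).trans ((congrArg (T₃.mor₁ ≫ ·) hm₂φ.symm).trans ((Category.assoc _ _ _).symm.trans ((congrArg (· ≫ descShift h) (comp_distTriang_mor_zero₁₂ _ hT₃)).trans zero_comp))))
  change E ⟶ A at ρ
  change b = jE ≫ ρ at hρ
  obtain ⟨χ, hχ⟩ := Triangle.yoneda_exact₂ _ hT₃ ((-a) ≫ jE) (by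
    exact (Category.assoc T₃.mor₁ (-a) jE).symm.trans (comp_distTriang_mor_zero₁₂ _ hTE))
  change C₀⟦(-1:ℤ)⟧ ⟶ E at χ
  change (-a) ≫ jE = T₃.mor₂ ≫ χ at hχ
  obtain ⟨d, hd⟩ := Triangle.yoneda_exact₃ _ hT₃ (descShift h - χ ≫ ρ) (by
    refine (Preadditive.comp_sub T₃.mor₂ (descShift h) (χ ≫ ρ)).trans ?_
    exact (congrArg₂ (· - ·) hm₂φ ((Category.assoc T₃.mor₂ χ ρ).symm.trans ((congrArg (· ≫ ρ) hχ.symm).trans ((Category.assoc (-a) jE ρ).trans (congrArg ((-a) ≫ ·) hρ.symm))))).trans (sub_self _))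
  change L'⟦(-1:ℤ)⟧⟦(1:ℤ)⟧ ⟶ A at d
  obtain ⟨m₃, hm₃⟩ : ∃ m : C₀⟦(-1:ℤ)⟧ ⟶ L'⟦(-1:ℤ)⟧⟦(1:ℤ)⟧,
      descShift h - χ ≫ ρ = m ≫ d := ⟨T₃.mor₃, hd⟩
  have hsplit : descShift h = χ ≫ ρ + m₃ ≫ d := by rw [← hm₃]; abel
  rw [hsplit]
  exact FactorsThru.add N hNiso hNext _ _ ⟨E, hEN, χ, ρ, rfl⟩
    ⟨L'⟦(-1:ℤ)⟧⟦(1:ℤ)⟧, hNiso ((shiftEquiv C (1:ℤ)).counitIso.app L').symm hL', m₃, d, rfl⟩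

end Auxiliary

theorem stmt18 (N : Set C)
    (hN0 : ∀ X : C, Limits.IsZero X → X ∈ N)
    (hNiso : ∀ ⦃X Y : C⦄, (X ≅ Y) → X ∈ N → Y ∈ N)
    (hNsum : ∀ ⦃X Z : C⦄ (i : X ⟶ Z) (r : Z ⟶ X), i ≫ r = 𝟙 X → Z ∈ N → X ∈ N)
    (hNext : ∀ (T : Triangle C), (T ∈ distTriang C) → T.obj₁ ∈ N → T.obj₃ ∈ N → T.obj₂ ∈ N)
    (hCone : ∀ X : C, ∃ (N' N₀ : C) (_ : N' ∈ N) (_ : N₀ ∈ N)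
      (u : N' ⟶ N₀) (v : N₀ ⟶ X) (w : X ⟶ N'⟦(1:ℤ)⟧),
        Triangle.mk u v w ∈ distTriang C)
    {A B C₀ : C} (f : A ⟶ B) (g : B ⟶ C₀) (h : C₀ ⟶ A⟦(1:ℤ)⟧)
    (hT : Triangle.mk f g h ∈ distTriang C)
    (hLex : LexCond N h) (hRex : RexCond N h) :
    FactorsThru N h ∧ FactorsThru N (descShift h) := by
  constructor
  · obtain ⟨K', K₀, hK', hK₀, u₀, p, w₀, hTK⟩ := hCone (A⟦(1:ℤ)⟧)
    exact FactorsThru.of_rex N hNiso hNext h hRex hK' hK₀ u₀ p w₀ hTK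
  · obtain ⟨L', L₀, hL', hL₀, u₁, x, w₁, hTL⟩ := hCone C₀
    exact FactorsThru.of_lex N hNiso hNext h hLex hL' hL₀ u₁ x w₁ hTL
end
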